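/- arXiv:2603.03141 — 7 statements merged into one kernel-verified Lean document; each statement's English description precedes it below -/
import Mathlib

section
/- Let σ be a well-formed trace. If σ contains a pair of conflicting events that is an HB race in σ, then σ contains a pair of conflicting events that is a sync-preserving race in σ. -/
/-!
Events, traces, and predictive data races.

An event datum is a pair of a thread identifier and an operation
(read/write of a memory location, or acquire/release of a lock).
Following the convention that events of a trace are identified with
positions (hence pairwise distinct), a trace is modeled as a
duplicate-free list of event *identifiers* (natural numbers), listed
in trace order, together with a global data assignment
`ev : ℕ → EventData` giving the thread and operation of each event.
-/

inductive Op : Type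
  | read : ℕ → Op
  | write : ℕ → Op
  | acq : ℕ → Op
  | rel : ℕ → Op
  deriving DecidableEq

structure EventData : Type where
  thread : ℕ
  op : Op
  deriving DecidableEq

abbrev Trace : Type := List ℕ

namespace Race

variable (ev : ℕ → EventData)

/-- Trace order: `e1` occurs no later than `e2` in `σ`. -/
def trord (σ : Trace) (e1 e2 : ℕ) : Prop :=
  e1 ∈ σ ∧ e2 ∈ σ ∧ σ.idxOf e1 ≤ σ.idxOf e2

/-- Thread order: trace order plus equality of threads. -/
def threadOrd (σ : Trace) (e1 e2 : ℕ) : Prop :=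
  trord σ e1 e2 ∧ (ev e1).thread = (ev e2).thread

/-- Lock-semantics check: `h` records, for each lock, the thread currently
holding it.  A lock may be acquired only when free, and released only by
the thread holding it. -/
def lockOk : (ℕ → Option ℕ) → Trace → Prop
  | _, [] => True
  | h, e :: rest =>
    match (ev e).op with
    | Op.acq l => h l = none ∧ lockOk (Function.update h l (some (ev e).thread)) rest
    | Op.rel l => h l = some (ev e).thread ∧ lockOk (Function.update h l none) rest
    | _ => lockOk h rest

/-- A well-formed trace: pairwise distinct events respecting lock semantics. -/
def WellFormed (σ : Trace) : Prop := σ.Nodup ∧ lockOk ev (fun _ => none) σ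

/-- A well-formed subtrace: a contiguous subtrace of some well-formed trace. -/
def WellFormedSub (σ : Trace) : Prop :=
  ∃ pre suf : Trace, WellFormed ev (pre ++ σ ++ suf)

/-- Happens-before: the smallest partial order on the events of `σ` containing
thread order and ordering each release before every later acquire of the
same lock. -/
inductive HB (σ : Trace) : ℕ → ℕ → Prop
  | thread_order {e1 e2 : ℕ} : threadOrd ev σ e1 e2 → HB σ e1 e2
  | rel_acq {e1 e2 l : ℕ} :
      trord σ e1 e2 → (ev e1).op = Op.rel l → (ev e2).op = Op.acq l → HB σ e1 e2
  | trans {e1 e2 e3 : ℕ} : HB σ e1 e2 → HB σ e2 e3 → HB σ e1 e3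

def isWrite (o : Op) : Prop := ∃ x, o = Op.write x

/-- The memory location accessed by an operation, if any. -/
def loc : Op → Option ℕ
  | Op.read x => some x
  | Op.write x => some x
  | _ => none

/-- Conflicting events: same location, different threads, at least one write. -/
def Conflicting (e1 e2 : ℕ) : Prop :=
  (ev e1).thread ≠ (ev e2).thread ∧
  (∃ x, loc (ev e1).op = some x ∧ loc (ev e2).op = some x) ∧
  (isWrite (ev e1).op ∨ isWrite (ev e2).op)

/-- An HB race: a conflicting pair of events of `σ`, unordered by happens-before. -/
def HBRace (σ : Trace) (e1 e2 : ℕ) : Prop :=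
  e1 ∈ σ ∧ e2 ∈ σ ∧ Conflicting ev e1 e2 ∧ ¬ HB ev σ e1 e2 ∧ ¬ HB ev σ e2 e1

/-- `lw σ e`: the last write (to the location read by `e`) before `e` in `σ`. -/
def lw (σ : Trace) (e : ℕ) : Option ℕ :=
  match (ev e).op with
  | Op.read x =>
      ((σ.take (σ.idxOf e)).filter fun f => decide ((ev f).op = Op.write x)).getLast?
  | _ => none

/-- The matching release of an acquire: the first release of the same lock after it. -/
def matchRel (σ : Trace) (a : ℕ) : Option ℕ :=
  match (ev a).op with
  | Op.acq l =>
      ((σ.drop (σ.idxOf a + 1)).filter fun f => decide ((ev f).op = Op.rel l)).head?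
  | _ => none

/-- The matching acquire of a release: the last acquire of the same lock before it. -/
def matchAcq (σ : Trace) (r : ℕ) : Option ℕ :=
  match (ev r).op with
  | Op.rel l =>
      ((σ.take (σ.idxOf r)).filter fun f => decide ((ev f).op = Op.acq l)).getLast?
  | _ => none

/-- The last event of the same thread before `e` in `σ`. -/
def prevE (σ : Trace) (e : ℕ) : Option ℕ :=
  ((σ.take (σ.idxOf e)).filter fun f => decide ((ev f).thread = (ev e).thread)).getLast?

/-- `ρ` is a correct reordering of `σ`. -/
structure CorrectReordering (σ ρ : Trace) : Prop where
  wf : WellFormed ev ρ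
  subset : ∀ e ∈ ρ, e ∈ σ
  to_closed : ∀ e1 e2 : ℕ, threadOrd ev σ e1 e2 → e2 ∈ ρ → e1 ∈ ρ ∧ threadOrd ev ρ e1 e2
  lw_eq : ∀ e ∈ ρ, (∃ x, (ev e).op = Op.read x) → lw ev ρ e = lw ev σ e

/-- `e` is enabled in the correct reordering `ρ` of `σ`. -/
def Enabled (σ ρ : Trace) (e : ℕ) : Prop :=
  e ∈ σ ∧ e ∉ ρ ∧ ∀ f : ℕ, threadOrd ev σ f e → f ≠ e → f ∈ ρ

/-- A reordering is sync-preserving if acquires of a common lock keep their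
relative order from `σ`. -/
def SyncPres (σ ρ : Trace) : Prop :=
  ∀ a1 a2 l : ℕ, a1 ∈ ρ → a2 ∈ ρ → (ev a1).op = Op.acq l → (ev a2).op = Op.acq l →
    (trord ρ a1 a2 ↔ trord σ a1 a2)

/-- A sync-preserving race. -/
def SyncPresRace (σ : Trace) (e1 e2 : ℕ) : Prop :=
  e1 ∈ σ ∧ e2 ∈ σ ∧ Conflicting ev e1 e2 ∧
  ∃ ρ : Trace, CorrectReordering ev σ ρ ∧ SyncPres ev σ ρ ∧
    Enabled ev σ ρ e1 ∧ Enabled ev σ ρ e2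

/-- A predictive race. -/
def PredictiveRace (σ : Trace) (e1 e2 : ℕ) : Prop :=
  e1 ∈ σ ∧ e2 ∈ σ ∧ Conflicting ev e1 e2 ∧
  ∃ ρ : Trace, CorrectReordering ev σ ρ ∧ Enabled ev σ ρ e1 ∧ Enabled ev σ ρ e2

/-- A subset of the events of `σ`, downward closed under thread order and
closed under last-writes. -/
def TLClosed (σ : Trace) (S : Set ℕ) : Prop :=
  (∀ e ∈ S, e ∈ σ) ∧
  (∀ e1 e2 : ℕ, threadOrd ev σ e1 e2 → e2 ∈ S → e1 ∈ S) ∧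
  (∀ e ∈ S, ∀ f : ℕ, lw ev σ e = some f → f ∈ S)

/-- The smallest TL-closed set containing `S`. -/
def TLClosure (σ : Trace) (S : Set ℕ) : Set ℕ :=
  ⋂₀ {C : Set ℕ | TLClosed ev σ C ∧ S ⊆ C}

/-- Sync-preserving closed sets. -/
def SPClosed (σ : Trace) (S : Set ℕ) : Prop :=
  TLClosed ev σ S ∧
  ∀ a1 a2 l : ℕ, a1 ∈ S → a2 ∈ S → (ev a1).op = Op.acq l → (ev a2).op = Op.acq l →
    trord σ a1 a2 → a1 ≠ a2 → ∀ r : ℕ, matchRel ev σ a1 = some r → r ∈ S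

/-- The smallest sync-preserving closed set containing `S`. -/
def SPClosure (σ : Trace) (S : Set ℕ) : Set ℕ :=
  ⋂₀ {C : Set ℕ | SPClosed ev σ C ∧ S ⊆ C}

/-- `SPIdeal σ e1 e2 = SPClosure σ ({prev σ e1, prev σ e2} \ {⊥})`. -/
def SPIdeal (σ : Trace) (e1 e2 : ℕ) : Set ℕ :=
  SPClosure ev σ {f : ℕ | prevE ev σ e1 = some f ∨ prevE ev σ e2 = some f}

/-- Local time: the number of events strictly below `e` in thread order. -/
def ltime (σ : Trace) (e : ℕ) : ℕ :=
  ((σ.take (σ.idxOf e)).filter fun f => decide ((ev f).thread = (ev e).thread)).length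

/-- Causal timestamp: for each thread `t`, the maximum local time of an
event of thread `t` happening before `e` (and `-1` if there is none). -/
noncomputable def ctime (σ : Trace) (e : ℕ) (t : ℕ) : ℤ :=
  sSup (insert (-1)
    {n : ℤ | ∃ f ∈ σ, (ev f).thread = t ∧ HB ev σ f e ∧ n = (ltime ev σ f : ℤ)})

end Race



namespace SPAux0
open List

lemma indexOf_filter_le_iff (p : ℕ → Bool) :
    ∀ (l : List ℕ) (a b : ℕ), a ∈ l.filter p → b ∈ l.filter p →
      ((l.filter p).idxOf a ≤ (l.filter p).idxOf b ↔ l.idxOf a ≤ l.idxOf b) := by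
  intro l
  induction l with
  | nil => intro a b ha; simp at ha
  | cons c t ih =>
    intro a b ha hb
    have hpa : p a = true := (mem_filter.mp ha).2
    have hpb : p b = true := (mem_filter.mp hb).2
    by_cases hpc : p c = true
    · by_cases hac : a = c
      · subst hac
        simp [filter_cons, hpc, idxOf_cons_self]
      · by_cases hbc : b = c
        · subst hbc
          rw [filter_cons_of_pos hpc] at ha
          have ha' : a ∈ t.filter p := by
            rcases mem_cons.mp ha with h | h
            · exact absurd h hac
            · exact h
          rw [filter_cons_of_pos hpc, idxOf_cons_self,
            idxOf_cons_ne _ (Ne.symm hac), idxOf_cons_self,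
            idxOf_cons_ne _ (Ne.symm hac)]
          simp
        · rw [filter_cons_of_pos hpc] at ha hb
          have ha' : a ∈ t.filter p := by
            rcases mem_cons.mp ha with h | h
            · exact absurd h hac
            · exact h
          have hb' : b ∈ t.filter p := by
            rcases mem_cons.mp hb with h | h
            · exact absurd h hbc
            · exact h
          rw [filter_cons_of_pos hpc, idxOf_cons_ne _ (Ne.symm hac),
            idxOf_cons_ne _ (Ne.symm hbc), idxOf_cons_ne _ (Ne.symm hac),
            idxOf_cons_ne _ (Ne.symm hbc)]
          simpa [Nat.succ_le_succ_iff] using ih a b ha' hb'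
    · rw [filter_cons_of_neg hpc] at ha hb
      have hac : a ≠ c := fun h => hpc (h ▸ hpa)
      have hbc : b ≠ c := fun h => hpc (h ▸ hpb)
      rw [filter_cons_of_neg hpc, idxOf_cons_ne _ (Ne.symm hac),
        idxOf_cons_ne _ (Ne.symm hbc)]
      simpa [Nat.succ_le_succ_iff] using ih a b ha hb

lemma take_indexOf_filter (p : ℕ → Bool) :
    ∀ (l : List ℕ) (a : ℕ), a ∈ l.filter p →
      (l.filter p).take ((l.filter p).idxOf a) = (l.take (l.idxOf a)).filter p := by
  intro l
  induction l with
  | nil => intro a ha; simp at ha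
  | cons c t ih =>
    intro a ha
    have hpa : p a = true := (mem_filter.mp ha).2
    by_cases hpc : p c = true
    · by_cases hac : a = c
      · subst hac
        simp [filter_cons_of_pos hpc, idxOf_cons_self]
      · rw [filter_cons_of_pos hpc] at ha
        have ha' : a ∈ t.filter p := by
          rcases mem_cons.mp ha with h | h
          · exact absurd h hac
          · exact h
        rw [filter_cons_of_pos hpc, idxOf_cons_ne _ (Ne.symm hac),
          idxOf_cons_ne _ (Ne.symm hac)]
        simp only [Nat.succ_eq_add_one, take_succ_cons, filter_cons_of_pos hpc]
        rw [ih a ha']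
    · rw [filter_cons_of_neg hpc] at ha
      have hac : a ≠ c := fun h => hpc (h ▸ hpa)
      rw [filter_cons_of_neg hpc, idxOf_cons_ne _ (Ne.symm hac)]
      simp only [Nat.succ_eq_add_one, take_succ_cons, filter_cons_of_neg hpc]
      exact ih a ha

lemma indexOf_lt_of_pair_sublist :
    ∀ (l : List ℕ), l.Nodup → ∀ (x y : ℕ), [x, y] <+ l → l.idxOf x < l.idxOf y := by
  intro l
  induction l with
  | nil => intro _ x y h; exact absurd (h.subset (by simp : x ∈ [x,y])) (by simp)
  | cons c t ih =>
    intro hnd x y h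
    have hct : c ∉ t := (nodup_cons.mp hnd).1
    cases h with
    | cons _ h' =>
      have hx : x ∈ t := h'.subset (by simp)
      have hy : y ∈ t := h'.subset (by simp)
      have hxc : x ≠ c := fun e => hct (e ▸ hx)
      have hyc : y ≠ c := fun e => hct (e ▸ hy)
      rw [idxOf_cons_ne _ (Ne.symm hxc), idxOf_cons_ne _ (Ne.symm hyc)]
      exact Nat.succ_lt_succ (ih (nodup_cons.mp hnd).2 x y h')
    | cons_cons _ h' =>
      have hy : y ∈ t := h'.subset (by simp)
      have hyc : y ≠ c := fun e => hct (e ▸ hy)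
      rw [idxOf_cons_self, idxOf_cons_ne _ (Ne.symm hyc)]
      exact Nat.succ_pos _

lemma indexOf_lt_of_mem_take :
    ∀ (l : List ℕ) (n : ℕ) (a : ℕ), a ∈ l.take n → l.idxOf a < n := by
  intro l
  induction l with
  | nil => intro n a ha; simp at ha
  | cons c t ih =>
    intro n a ha
    cases n with
    | zero => simp at ha
    | succ m =>
      rw [take_succ_cons] at ha
      by_cases hac : a = c
      · subst hac; rw [idxOf_cons_self]; exact Nat.succ_pos _
      · have ha' : a ∈ t.take m := by
          rcases mem_cons.mp ha with h | h
          · exact absurd h hac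
          · exact h
        rw [idxOf_cons_ne _ (Ne.symm hac)]
        exact Nat.succ_lt_succ (ih m a ha')

lemma getLast?_filter_of_getLast? (q : ℕ → Bool) (L : List ℕ) (w : ℕ)
    (h : L.getLast? = some w) (hq : q w = true) : (L.filter q).getLast? = some w := by
  induction L using List.reverseRecOn with
  | nil => simp at h
  | append_singleton L' a _ =>
    rw [getLast?_concat] at h
    obtain rfl : a = w := by injection h
    rw [filter_append, filter_cons_of_pos hq]
    simp [getLast?_concat]

end SPAux0


namespace SPAux
open List Race

variable (ev : ℕ → EventData)

/-- Is `f` an event on lock `l`? -/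
def lockEv (l f : ℕ) : Bool :=
  match (ev f).op with
  | Op.acq l' => decide (l' = l)
  | Op.rel l' => decide (l' = l)
  | _ => false

/-- Feasibility of the per-lock projection of a trace. -/
inductive LAlt (l : ℕ) : Option ℕ → List ℕ → Prop
  | nil (s : Option ℕ) : LAlt l s []
  | acq {e : ℕ} {rest : List ℕ} : (ev e).op = Op.acq l →
      LAlt l (some (ev e).thread) rest → LAlt l none (e :: rest)
  | rel {e : ℕ} {rest : List ℕ} {t : ℕ} : (ev e).op = Op.rel l →
      (ev e).thread = t → LAlt l none rest → LAlt l (some t) (e :: rest)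

lemma lockOk_cons_acq {h : ℕ → Option ℕ} {e : ℕ} {rest : Trace} {l0 : ℕ}
    (hop : (ev e).op = Op.acq l0) :
    lockOk ev h (e :: rest) ↔
      h l0 = none ∧ lockOk ev (Function.update h l0 (some (ev e).thread)) rest := by
  have heq : lockOk ev h (e :: rest) = match (ev e).op with
    | Op.acq l => h l = none ∧ lockOk ev (Function.update h l (some (ev e).thread)) rest
    | Op.rel l => h l = some (ev e).thread ∧ lockOk ev (Function.update h l none) rest
    | _ => lockOk ev h rest := rfl
  rw [heq, hop]

lemma lockOk_cons_rel {h : ℕ → Option ℕ} {e : ℕ} {rest : Trace} {l0 : ℕ}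
    (hop : (ev e).op = Op.rel l0) :
    lockOk ev h (e :: rest) ↔
      h l0 = some (ev e).thread ∧ lockOk ev (Function.update h l0 none) rest := by
  have heq : lockOk ev h (e :: rest) = match (ev e).op with
    | Op.acq l => h l = none ∧ lockOk ev (Function.update h l (some (ev e).thread)) rest
    | Op.rel l => h l = some (ev e).thread ∧ lockOk ev (Function.update h l none) rest
    | _ => lockOk ev h rest := rfl
  rw [heq, hop]

lemma lockOk_cons_other {h : ℕ → Option ℕ} {e : ℕ} {rest : Trace}
    (hop : ∀ l0, (ev e).op ≠ Op.acq l0 ∧ (ev e).op ≠ Op.rel l0) :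
    lockOk ev h (e :: rest) ↔ lockOk ev h rest := by
  have heq : lockOk ev h (e :: rest) = match (ev e).op with
    | Op.acq l => h l = none ∧ lockOk ev (Function.update h l (some (ev e).thread)) rest
    | Op.rel l => h l = some (ev e).thread ∧ lockOk ev (Function.update h l none) rest
    | _ => lockOk ev h rest := rfl
  rw [heq]
  rcases hc : (ev e).op with x | x | x | x
  · rfl
  · rfl
  · exact absurd hc (hop x).1
  · exact absurd hc (hop x).2

lemma lockOk_iff_lalt : ∀ (σ : Trace) (h : ℕ → Option ℕ),
    lockOk ev h σ ↔ ∀ l, LAlt ev l (h l) (σ.filter (lockEv ev l)) := by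
  intro σ
  induction σ with
  | nil =>
    intro h
    simp only [filter_nil]
    exact ⟨fun _ l => LAlt.nil _, fun _ => trivial⟩
  | cons e rest ih =>
    intro h
    rcases hop : (ev e).op with z | z | l0 | l0
    · rw [lockOk_cons_other ev (by simp [hop]), ih]
      have hfe : ∀ l, lockEv ev l e = false := fun l => by simp [lockEv, hop]
      constructor
      · intro hall l; rw [filter_cons_of_neg (by simp [hfe l])]; exact hall l
      · intro hall l; have := hall l; rwa [filter_cons_of_neg (by simp [hfe l])] at this
    · rw [lockOk_cons_other ev (by simp [hop]), ih]
      have hfe : ∀ l, lockEv ev l e = false := fun l => by simp [lockEv, hop]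
      constructor
      · intro hall l; rw [filter_cons_of_neg (by simp [hfe l])]; exact hall l
      · intro hall l; have := hall l; rwa [filter_cons_of_neg (by simp [hfe l])] at this
    · -- acquire
      rw [lockOk_cons_acq ev hop, ih]
      constructor
      · rintro ⟨hnone, hall⟩ l
        by_cases hl : l = l0
        · subst hl
          rw [filter_cons_of_pos (by simp [lockEv, hop]), hnone]
          refine LAlt.acq hop ?_
          have := hall l
          rwa [Function.update_self] at this
        · rw [filter_cons_of_neg (by simp [lockEv, hop, Ne.symm hl])]
          have := hall l
          rwa [Function.update_of_ne hl] at this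
      · intro hall
        have h0 := hall l0
        rw [filter_cons_of_pos (by simp [lockEv, hop])] at h0
        obtain ⟨hnone, h0'⟩ : h l0 = none ∧
            LAlt ev l0 (some (ev e).thread) (rest.filter (lockEv ev l0)) := by
          generalize hs : h l0 = s at h0
          cases h0 with
          | acq _ h' => exact ⟨by simp [hs], h'⟩
          | rel hr _ _ => rw [hop] at hr; exact absurd hr (by simp)
        refine ⟨hnone, fun l => ?_⟩
        by_cases hl : l = l0
        · subst hl
          rw [Function.update_self]
          exact h0'
        · rw [Function.update_of_ne hl]
          have := hall l
          rwa [filter_cons_of_neg (by simp [lockEv, hop, Ne.symm hl])] at this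
    · -- release
      rw [lockOk_cons_rel ev hop, ih]
      constructor
      · rintro ⟨hsome, hall⟩ l
        by_cases hl : l = l0
        · subst hl
          rw [filter_cons_of_pos (by simp [lockEv, hop]), hsome]
          refine LAlt.rel hop rfl ?_
          have := hall l
          rwa [Function.update_self] at this
        · rw [filter_cons_of_neg (by simp [lockEv, hop, Ne.symm hl])]
          have := hall l
          rwa [Function.update_of_ne hl] at this
      · intro hall
        have h0 := hall l0
        rw [filter_cons_of_pos (by simp [lockEv, hop])] at h0
        obtain ⟨hsome, h0'⟩ : h l0 = some (ev e).thread ∧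
            LAlt ev l0 none (rest.filter (lockEv ev l0)) := by
          generalize hs : h l0 = s at h0
          cases h0 with
          | acq ha _ => rw [hop] at ha; exact absurd ha (by simp)
          | rel _ ht h' => exact ⟨by rw [ht], h'⟩
        refine ⟨hsome, fun l => ?_⟩
        by_cases hl : l = l0
        · subst hl
          rw [Function.update_self]
          exact h0'
        · rw [Function.update_of_ne hl]
          have := hall l
          rwa [filter_cons_of_neg (by simp [lockEv, hop, Ne.symm hl])] at this

/-- Closure properties of a selection `p` relative to the lock structure. -/
inductive Good (l : ℕ) (p : ℕ → Bool) : List ℕ → Prop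
  | nil : Good l p []
  | single (a : ℕ) : Good l p [a]
  | pair {a r : ℕ} {rest : List ℕ} :
      (p r = true → p a = true) →
      (p a = true → (∃ g ∈ rest, p g = true ∧ (ev g).op = Op.acq l) → p r = true) →
      Good l p rest → Good l p (a :: r :: rest)

lemma exists_acq {l : ℕ} {p : ℕ → Bool} :
    ∀ {L : List ℕ}, LAlt ev l none L → Good ev l p L → (∃ g ∈ L, p g = true) →
      ∃ g ∈ L, p g = true ∧ (ev g).op = Op.acq l := by
  intro L hL hG
  induction hG with
  | nil => rintro ⟨g, hg, -⟩; simp at hg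
  | single a =>
    rintro ⟨g, hg, hpg⟩
    simp only [mem_singleton] at hg; subst hg
    cases hL with
    | acq ha _ => exact ⟨g, by simp, hpg, ha⟩
  | @pair a r rest H1 H2 hGrest ih =>
    rintro ⟨g, hg, hpg⟩
    cases hL with
    | acq ha h2 =>
      cases h2 with
      | rel hr ht h3 =>
        by_cases hpa : p a = true
        · exact ⟨a, by simp, hpa, ha⟩
        · have hpr : ¬ p r = true := fun hpr => hpa (H1 hpr)
          have hgrest : g ∈ rest := by
            rcases mem_cons.mp hg with h | h
            · exact absurd (h ▸ hpg) hpa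
            · rcases mem_cons.mp h with h' | h'
              · exact absurd (h' ▸ hpg) hpr
              · exact h'
          obtain ⟨g', hg', hpg', hopg'⟩ := ih h3 ⟨g, hgrest, hpg⟩
          exact ⟨g', by simp [hg'], hpg', hopg'⟩

lemma subalt {l : ℕ} {p : ℕ → Bool} :
    ∀ {L : List ℕ}, LAlt ev l none L → Good ev l p L → LAlt ev l none (L.filter p) := by
  intro L hL hG
  induction hG with
  | nil => exact LAlt.nil _
  | single a =>
    cases hL with
    | acq ha _ =>
      by_cases hpa : p a = true
      · rw [filter_cons_of_pos hpa, filter_nil]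
        exact LAlt.acq ha (LAlt.nil _)
      · rw [filter_cons_of_neg hpa, filter_nil]
        exact LAlt.nil _
  | @pair a r rest H1 H2 hGrest ih =>
    cases hL with
    | acq ha h2 =>
      cases h2 with
      | rel hr ht h3 =>
        by_cases hpa : p a = true
        · by_cases hpr : p r = true
          · rw [filter_cons_of_pos hpa, filter_cons_of_pos hpr]
            exact LAlt.acq ha (LAlt.rel hr ht (ih h3))
          · have hrest : rest.filter p = [] := by
              rw [filter_eq_nil_iff]
              intro g hg hpg
              exact hpr (H2 hpa (exists_acq ev h3 hGrest ⟨g, hg, hpg⟩))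
            rw [filter_cons_of_pos hpa, filter_cons_of_neg hpr, hrest]
            exact LAlt.acq ha (LAlt.nil _)
        · have hpr : ¬ p r = true := fun hpr => hpa (H1 hpr)
          rw [filter_cons_of_neg hpa, filter_cons_of_neg hpr]
          exact ih h3

lemma good_of {σ : Trace} {l : ℕ} {p : ℕ → Bool}
    (H1 : ∀ a r : ℕ, (ev a).op = Op.acq l → (ev r).op = Op.rel l →
        (ev r).thread = (ev a).thread → [a, r] <+ σ → p r = true → p a = true)
    (H2 : ∀ r g : ℕ, (ev r).op = Op.rel l → (ev g).op = Op.acq l →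
        [r, g] <+ σ → p g = true → p r = true) :
    ∀ (n : ℕ) (L : List ℕ), L.length ≤ n → LAlt ev l none L → L <+ σ → Good ev l p L := by
  intro n
  induction n with
  | zero =>
    intro L hlen hL _
    have : L = [] := List.eq_nil_of_length_eq_zero (Nat.le_zero.mp hlen)
    subst this; exact Good.nil
  | succ n ih =>
    intro L hlen hL hsub
    cases hL with
    | nil => exact Good.nil
    | @acq a rest' ha h2 =>
      cases h2 with
      | nil => exact Good.single a
      | @rel r rest t hr htr h3 =>
        refine Good.pair ?_ ?_ ?_
        · intro hpr
          refine H1 a r ha hr htr ?_ hpr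
          exact Sublist.trans (((nil_sublist rest).cons₂ r).cons₂ a) hsub
        · rintro _ ⟨g, hg, hpg, hopg⟩
          refine H2 r g hr hopg ?_ hpg
          have h1 : [r, g] <+ r :: rest := ((singleton_sublist.mpr hg).cons₂ r)
          exact Sublist.trans (h1.cons a) hsub
        · refine ih rest ?_ h3 ?_
          · simp only [length_cons] at hlen; omega
          · exact Sublist.trans ((sublist_cons_self r rest).trans
              (sublist_cons_self a (r :: rest))) hsub

end SPAux


namespace SPAux
open List Race
variable (ev : ℕ → EventData)

lemma hb_trord {σ : Trace} {a b : ℕ} (h : HB ev σ a b) : trord σ a b := by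
  induction h with
  | thread_order h => exact h.1
  | rel_acq h _ _ => exact h
  | trans _ _ ih1 ih2 => exact ⟨ih1.1, ih2.2.1, le_trans ih1.2.2 ih2.2.2⟩

lemma lw_match (σ : Trace) (e : ℕ) : lw ev σ e = match (ev e).op with
    | Op.read x =>
        ((σ.take (σ.idxOf e)).filter fun f => decide ((ev f).op = Op.write x)).getLast?
    | _ => none := rfl

lemma lw_read {σ : Trace} {e z : ℕ} (hop : (ev e).op = Op.read z) :
    lw ev σ e =
      ((σ.take (σ.idxOf e)).filter fun f => decide ((ev f).op = Op.write z)).getLast? := by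
  rw [lw_match, hop]

end SPAux




open Race in
/-- Proposition: HB ⇒ sync-preserving.  If a well-formed trace
contains a pair of conflicting events that is an HB race, then it contains a
pair of conflicting events that is a sync-preserving race. -/
theorem hb_race_implies_syncpres_race (ev : ℕ → EventData) (σ : Trace)
    (hwf : WellFormed ev σ)
    (hhb : ∃ e1 e2 : ℕ, HBRace ev σ e1 e2) :
    ∃ e1 e2 : ℕ, SyncPresRace ev σ e1 e2 := by
  classical
  obtain ⟨hnd, hlk⟩ := hwf
  have hkey : ∃ n : ℕ, ∃ x y : ℕ, HBRace ev σ x y ∧ max (σ.idxOf x) (σ.idxOf y) = n := by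
    obtain ⟨a1, a2, hr⟩ := hhb; exact ⟨_, a1, a2, hr, rfl⟩
  obtain ⟨x, y, hrace, hmax⟩ := Nat.find_spec hkey
  have hmin := fun m (hm : m < Nat.find hkey) => Nat.find_min hkey hm
  obtain ⟨hxσ, hyσ, hconf, hnxy, hnyx⟩ := hrace
  obtain ⟨hth, ⟨z0, hlocx, hlocy⟩, hwxy⟩ := hconf
  have hxN : σ.idxOf x ≤ Nat.find hkey := hmax ▸ le_max_left _ _
  have hyN : σ.idxOf y ≤ Nat.find hkey := hmax ▸ le_max_right _ _
  have hstrict : ∀ {a b : ℕ}, HB ev σ a b → a ≠ b → σ.idxOf a < σ.idxOf b := by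
    intro a b h hne
    have ht := SPAux.hb_trord ev h
    exact lt_of_le_of_ne ht.2.2 (fun he => hne ((List.idxOf_inj ht.1).mp he))
  set S : ℕ → Prop := fun f => (HB ev σ f x ∧ f ≠ x) ∨ (HB ev σ f y ∧ f ≠ y) with hSdef
  set p : ℕ → Bool := fun f => decide (S f) with hp
  set ρ : Trace := σ.filter p with hρ
  have hpS : ∀ f, p f = true ↔ S f := fun f => by simp [hp]
  have hmemρ : ∀ f, f ∈ ρ ↔ f ∈ σ ∧ S f := by
    intro f; rw [hρ, List.mem_filter, hpS]
  have hSidx : ∀ {f}, S f → σ.idxOf f < Nat.find hkey := by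
    rintro f (⟨h, hne⟩ | ⟨h, hne⟩)
    · exact lt_of_lt_of_le (hstrict h hne) hxN
    · exact lt_of_lt_of_le (hstrict h hne) hyN
  have hnSx : ¬ S x := by rintro (⟨_, hne⟩ | ⟨h, _⟩); exacts [hne rfl, hnxy h]
  have hnSy : ¬ S y := by rintro (⟨h, _⟩ | ⟨_, hne⟩); exacts [hnyx h, hne rfl]
  have hSmem : ∀ {f}, S f → f ∈ σ := by
    rintro f (⟨h, _⟩ | ⟨h, _⟩) <;> exact (SPAux.hb_trord ev h).1
  have hSclose : ∀ {f g : ℕ}, HB ev σ f g → S g → f ≠ x → f ≠ y → S f := by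
    rintro f g hfg (⟨h, _⟩ | ⟨h, _⟩) hfx hfy
    · exact Or.inl ⟨HB.trans hfg h, hfx⟩
    · exact Or.inr ⟨HB.trans hfg h, hfy⟩
  have hne_lock : ∀ {f l : ℕ}, ((ev f).op = Op.acq l ∨ (ev f).op = Op.rel l) →
      f ≠ x ∧ f ≠ y := by
    intro f l hf
    constructor
    · rintro rfl
      rcases hf with h | h <;> rw [h] at hlocx <;> simp [Race.loc] at hlocx
    · rintro rfl
      rcases hf with h | h <;> rw [h] at hlocy <;> simp [Race.loc] at hlocy
  -- last-write closure
  have hlwS : ∀ {e w : ℕ}, S e → lw ev σ e = some w → S w := by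
    intro e w hSe hw
    rcases hopc : (ev e).op with z | z | l | l
    case acq => rw [SPAux.lw_match, hopc] at hw; cases hw
    case rel => rw [SPAux.lw_match, hopc] at hw; cases hw
    case write => rw [SPAux.lw_match, hopc] at hw; cases hw
    case read =>
      rw [SPAux.lw_read ev hopc] at hw
      have hwmem := List.mem_of_mem_getLast? hw
      rw [List.mem_filter] at hwmem
      obtain ⟨hwtake, hwq⟩ := hwmem
      have hopw : (ev w).op = Op.write z := of_decide_eq_true hwq
      have hwσ : w ∈ σ := List.take_subset _ _ hwtake
      have hwlt : σ.idxOf w < σ.idxOf e := SPAux0.indexOf_lt_of_mem_take σ _ w hwtake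
      have heσ : e ∈ σ := hSmem hSe
      by_cases hhb : HB ev σ w e
      · have hwx : w ≠ x := by
          rintro rfl
          rcases hSe with ⟨h, hne⟩ | ⟨h, hne⟩
          · exact absurd (hstrict hhb (Ne.symm hne)) (not_lt.mpr (le_of_lt (hstrict h hne)))
          · exact hnxy (HB.trans hhb h)
        have hwy : w ≠ y := by
          rintro rfl
          rcases hSe with ⟨h, hne⟩ | ⟨h, hne⟩
          · exact hnyx (HB.trans hhb h)
          · exact absurd (hstrict hhb (Ne.symm hne)) (not_lt.mpr (le_of_lt (hstrict h hne)))
        exact hSclose hhb hSe hwx hwy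
      · exfalso
        by_cases hthw : (ev w).thread = (ev e).thread
        · exact hhb (HB.thread_order ⟨⟨hwσ, heσ, le_of_lt hwlt⟩, hthw⟩)
        · have hnew : ¬ HB ev σ e w := fun h =>
            absurd (SPAux.hb_trord ev h).2.2 (not_le.mpr hwlt)
          have hrace2 : HBRace ev σ w e :=
            ⟨hwσ, heσ, ⟨hthw, ⟨z, by rw [hopw]; rfl, by rw [hopc]; rfl⟩,
              Or.inl ⟨z, hopw⟩⟩, hhb, hnew⟩
          exact hmin (σ.idxOf e) (hSidx hSe)
            ⟨w, e, hrace2, max_eq_right (le_of_lt hwlt)⟩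
  have hsubρ : ∀ e ∈ ρ, e ∈ σ := fun e he => (List.mem_filter.mp he).1
  have hidx_iff : ∀ {a b : ℕ}, a ∈ ρ → b ∈ ρ →
      (ρ.idxOf a ≤ ρ.idxOf b ↔ σ.idxOf a ≤ σ.idxOf b) := by
    intro a b ha hb
    rw [hρ] at ha hb ⊢
    exact SPAux0.indexOf_filter_le_iff p σ a b ha hb
  -- lock feasibility of ρ
  have H1 : ∀ l a r : ℕ, (ev a).op = Op.acq l → (ev r).op = Op.rel l →
      (ev r).thread = (ev a).thread → List.Sublist [a, r] σ → p r = true → p a = true := by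
    intro l a r hopa hopr htar hsub hpr
    have hma : a ∈ σ := hsub.subset (by simp)
    have hmr : r ∈ σ := hsub.subset (by simp)
    have hlt := SPAux0.indexOf_lt_of_pair_sublist σ hnd a r hsub
    have hhb : HB ev σ a r := HB.thread_order ⟨⟨hma, hmr, le_of_lt hlt⟩, htar.symm⟩
    rw [hpS] at hpr ⊢
    exact hSclose hhb hpr (hne_lock (Or.inl hopa)).1 (hne_lock (Or.inl hopa)).2
  have H2 : ∀ l r g : ℕ, (ev r).op = Op.rel l → (ev g).op = Op.acq l →
      List.Sublist [r, g] σ → p g = true → p r = true := by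
    intro l r g hopr hopg hsub hpg
    have hmr : r ∈ σ := hsub.subset (by simp)
    have hmg : g ∈ σ := hsub.subset (by simp)
    have hlt := SPAux0.indexOf_lt_of_pair_sublist σ hnd r g hsub
    have hhb : HB ev σ r g := HB.rel_acq ⟨hmr, hmg, le_of_lt hlt⟩ hopr hopg
    rw [hpS] at hpg ⊢
    exact hSclose hhb hpg (hne_lock (Or.inr hopr)).1 (hne_lock (Or.inr hopr)).2
  have hlock : lockOk ev (fun _ => none) ρ := by
    rw [SPAux.lockOk_iff_lalt]
    intro l
    have h1 := (SPAux.lockOk_iff_lalt ev σ (fun _ => none)).mp hlk l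
    have hgood := SPAux.good_of ev (H1 l) (H2 l)
      (σ.filter (SPAux.lockEv ev l)).length _ le_rfl h1 (List.filter_sublist (l := σ))
    have h2 := SPAux.subalt ev h1 hgood
    rw [hρ, List.filter_comm]
    exact h2
  have hCR : CorrectReordering ev σ ρ := by
    refine ⟨⟨hnd.filter p, hlock⟩, hsubρ, ?_, ?_⟩
    · -- to_closed
      intro f1 f2 hTO hf2
      have hSf2 : S f2 := ((hmemρ f2).mp hf2).2
      have hf1ρ : f1 ∈ ρ := by
        by_cases heq : f1 = f2
        · rw [heq]; exact hf2
        · have hhb12 : HB ev σ f1 f2 := HB.thread_order hTO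
          have hf1x : f1 ≠ x := by
            rintro rfl
            rcases hSf2 with ⟨h, hne⟩ | ⟨h, hne⟩
            · exact absurd (hstrict hhb12 heq) (not_lt.mpr (le_of_lt (hstrict h hne)))
            · exact hnxy (HB.trans hhb12 h)
          have hf1y : f1 ≠ y := by
            rintro rfl
            rcases hSf2 with ⟨h, hne⟩ | ⟨h, hne⟩
            · exact hnyx (HB.trans hhb12 h)
            · exact absurd (hstrict hhb12 heq) (not_lt.mpr (le_of_lt (hstrict h hne)))
          exact (hmemρ f1).mpr ⟨hTO.1.1, hSclose hhb12 hSf2 hf1x hf1y⟩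
      exact ⟨hf1ρ, ⟨⟨hf1ρ, hf2, (hidx_iff hf1ρ hf2).mpr hTO.1.2.2⟩, hTO.2⟩⟩
    · -- lw_eq
      intro e he hex
      obtain ⟨z, hopz⟩ := hex
      have htake : ρ.take (ρ.idxOf e) = (σ.take (σ.idxOf e)).filter p := by
        rw [hρ]
        exact SPAux0.take_indexOf_filter p σ e (hρ ▸ he)
      rw [SPAux.lw_read ev hopz, SPAux.lw_read ev hopz, htake, List.filter_comm]
      cases hlast : (((σ.take (σ.idxOf e)).filter
          fun f => decide ((ev f).op = Op.write z)).getLast?) with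
      | none =>
        rw [List.getLast?_eq_none_iff] at hlast
        rw [hlast]
        simp
      | some w =>
        have hSe : S e := ((hmemρ e).mp he).2
        have hSw : S w := hlwS hSe (by rw [SPAux.lw_read ev hopz]; exact hlast)
        exact SPAux0.getLast?_filter_of_getLast? p _ w hlast ((hpS w).mpr hSw)
  have hSP : SyncPres ev σ ρ := by
    intro a1 a2 l h1 h2 _ _
    constructor
    · intro h; exact ⟨hsubρ _ h1, hsubρ _ h2, (hidx_iff h1 h2).mp h.2.2⟩
    · intro h; exact ⟨h1, h2, (hidx_iff h1 h2).mpr h.2.2⟩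
  have hEx : Enabled ev σ ρ x :=
    ⟨hxσ, fun h => hnSx ((hmemρ x).mp h).2,
      fun f hTO hne => (hmemρ f).mpr ⟨hTO.1.1, Or.inl ⟨HB.thread_order hTO, hne⟩⟩⟩
  have hEy : Enabled ev σ ρ y :=
    ⟨hyσ, fun h => hnSy ((hmemρ y).mp h).2,
      fun f hTO hne => (hmemρ f).mpr ⟨hTO.1.1, Or.inr ⟨HB.thread_order hTO, hne⟩⟩⟩
  exact ⟨x, y, hxσ, hyσ, ⟨hth, ⟨z0, hlocx, hlocy⟩, hwxy⟩, ρ, hCR, hSP, hEx, hEy⟩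
end

section
/- Let σ be a well-formed trace. If σ contains a pair of conflicting events that is an HB race in σ, then σ contains a predictive race, i.e. a pair of conflicting events both of which are enabled in some correct reordering of σ. -/
namespace RaceProof

open Race List

variable (ev : ℕ → EventData)

/-! ### Generic list lemmas -/

theorem idxOf_lt_of_mem_take {l : List ℕ} {a : ℕ} :
    ∀ {n : ℕ}, a ∈ l.take n → l.idxOf a < n := by
  induction l with
  | nil => intro n h; simp at h
  | cons c t ih =>
    intro n h
    cases n with
    | zero => simp at h
    | succ m =>
      simp only [List.take_succ_cons, List.mem_cons] at h
      by_cases hac : a = c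
      · subst hac; simp [List.idxOf_cons_self]
      · rcases h with h | h
        · exact absurd h hac
        · rw [List.idxOf_cons_ne _ (Ne.symm hac)]
          exact Nat.succ_lt_succ (ih h)

theorem idxOf_filter_lt {l : List ℕ} (hl : l.Nodup) (p : ℕ → Bool) :
    ∀ {a b : ℕ}, a ∈ l.filter p → b ∈ l.filter p →
      l.idxOf a < l.idxOf b → (l.filter p).idxOf a < (l.filter p).idxOf b := by
  induction l with
  | nil => intro a b ha; simp at ha
  | cons c t ih =>
    intro a b ha hb hlt
    rcases List.nodup_cons.1 hl with ⟨hc, ht⟩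
    by_cases hpc : p c
    · rw [List.filter_cons_of_pos hpc] at ha hb ⊢
      by_cases hac : a = c
      · subst hac
        have hbc : b ≠ a := by
          intro h; subst h; exact lt_irrefl _ hlt
        rw [List.idxOf_cons_self, List.idxOf_cons_ne _ (Ne.symm hbc)]
        exact Nat.succ_pos _
      · have hbc : b ≠ c := by
          intro h; subst h
          rw [List.idxOf_cons_self] at hlt
          exact Nat.not_lt_zero _ hlt
        have ha' : a ∈ t.filter p := by
          rcases List.mem_cons.1 ha with h | h
          · exact absurd h hac
          · exact h
        have hb' : b ∈ t.filter p := by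
          rcases List.mem_cons.1 hb with h | h
          · exact absurd h hbc
          · exact h
        rw [List.idxOf_cons_ne _ (Ne.symm hac), List.idxOf_cons_ne _ (Ne.symm hbc)] at hlt ⊢
        exact Nat.succ_lt_succ (ih ht ha' hb' (Nat.lt_of_succ_lt_succ hlt))
    · rw [List.filter_cons_of_neg hpc] at ha hb ⊢
      have hac : a ≠ c := by
        intro h; subst h
        exact hpc (List.of_mem_filter ha)
      have hbc : b ≠ c := by
        intro h; subst h
        exact hpc (List.of_mem_filter hb)
      rw [List.idxOf_cons_ne _ (Ne.symm hac), List.idxOf_cons_ne _ (Ne.symm hbc)] at hlt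
      exact ih ht ha hb (Nat.lt_of_succ_lt_succ hlt)

theorem idxOf_filter_le_iff {l : List ℕ} (hl : l.Nodup) (p : ℕ → Bool) {a b : ℕ}
    (ha : a ∈ l.filter p) (hb : b ∈ l.filter p) :
    (l.filter p).idxOf a ≤ (l.filter p).idxOf b ↔ l.idxOf a ≤ l.idxOf b := by
  have hal : a ∈ l := List.mem_of_mem_filter ha
  have hbl : b ∈ l := List.mem_of_mem_filter hb
  constructor
  · intro h
    by_contra hcon
    push_neg at hcon
    exact absurd (idxOf_filter_lt hl p hb ha hcon) (not_lt.2 h)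
  · intro h
    rcases lt_or_eq_of_le h with h | h
    · exact le_of_lt (idxOf_filter_lt hl p ha hb h)
    · have : a = b := (List.idxOf_inj hal).1 h
      subst this; exact le_refl _

theorem take_idxOf_filter {l : List ℕ} (hl : l.Nodup) (p : ℕ → Bool) :
    ∀ {x : ℕ}, x ∈ l.filter p →
      (l.filter p).take ((l.filter p).idxOf x) = (l.take (l.idxOf x)).filter p := by
  induction l with
  | nil => intro x hx; simp at hx
  | cons c t ih =>
    intro x hx
    rcases List.nodup_cons.1 hl with ⟨hc, ht⟩
    by_cases hpc : p c
    · rw [List.filter_cons_of_pos hpc] at hx ⊢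
      by_cases hxc : x = c
      · subst hxc
        simp [List.idxOf_cons_self]
      · have hx' : x ∈ t.filter p := by
          rcases List.mem_cons.1 hx with h | h
          · exact absurd h hxc
          · exact h
        rw [List.idxOf_cons_ne _ (Ne.symm hxc), List.idxOf_cons_ne _ (Ne.symm hxc),
          List.take_succ_cons, List.take_succ_cons, List.filter_cons_of_pos hpc, ih ht hx']
    · rw [List.filter_cons_of_neg hpc] at hx ⊢
      have hxc : x ≠ c := by
        intro h; subst h; exact hpc (List.of_mem_filter hx)
      rw [List.idxOf_cons_ne _ (Ne.symm hxc), List.take_succ_cons,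
        List.filter_cons_of_neg hpc, ih ht hx]

theorem getLast?_filter {l : List ℕ} {a : ℕ} (p : ℕ → Bool)
    (h : l.getLast? = some a) (hp : p a) : (l.filter p).getLast? = some a := by
  rcases List.getLast?_eq_some_iff.1 h with ⟨l', rfl⟩
  rw [List.filter_append, List.filter_cons_of_pos hp, List.filter_nil]
  rw [List.getLast?_append]
  simp

/-! ### Lock state machinery -/

/-- One step of the lock-state machine. -/
def step (h : ℕ → Option ℕ) (e : ℕ) : ℕ → Option ℕ :=
  match (ev e).op with
  | Op.acq l => Function.update h l (some (ev e).thread)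
  | Op.rel l => Function.update h l none
  | _ => h

def runState (h : ℕ → Option ℕ) : Trace → (ℕ → Option ℕ)
  | [] => h
  | e :: rest => runState (step ev h e) rest

/-- The condition lockOk checks at one event. -/
def okAt (h : ℕ → Option ℕ) (e : ℕ) : Prop :=
  match (ev e).op with
  | Op.acq l => h l = none
  | Op.rel l => h l = some (ev e).thread
  | _ => True

theorem lockOk_cons {h : ℕ → Option ℕ} {e : ℕ} {rest : Trace} :
    lockOk ev h (e :: rest) ↔ okAt ev h e ∧ lockOk ev (step ev h e) rest := by
  cases hop : (ev e).op <;> simp [lockOk, okAt, step, hop]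

theorem lockOk_iff_splits {τ : Trace} :
    ∀ {h : ℕ → Option ℕ}, lockOk ev h τ ↔
      ∀ τ1 x τ2, τ = τ1 ++ x :: τ2 → okAt ev (runState ev h τ1) x := by
  induction τ with
  | nil =>
    intro h
    constructor
    · intro _ τ1 x τ2 heq
      exact absurd heq (by simp)
    · intro _; trivial
  | cons c rest ih =>
    intro h
    rw [lockOk_cons, ih]
    constructor
    · rintro ⟨h1, h2⟩ τ1 x τ2 heq
      cases τ1 with
      | nil =>
        simp only [List.nil_append, List.cons.injEq] at heq
        rcases heq with ⟨rfl, rfl⟩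
        exact h1
      | cons d τ1' =>
        simp only [List.cons_append, List.cons.injEq] at heq
        rcases heq with ⟨rfl, heq⟩
        exact h2 τ1' x τ2 heq
    · intro hall
      constructor
      · exact hall [] c rest rfl
      · intro τ1 x τ2 heq
        exact hall (c :: τ1) x τ2 (by rw [heq]; rfl)

theorem runState_concat (τ : Trace) (e : ℕ) (h : ℕ → Option ℕ) :
    runState ev h (τ ++ [e]) = step ev (runState ev h τ) e := by
  induction τ generalizing h with
  | nil => rfl
  | cons c t ih => exact ih (step ev h c)

/-- l-events of a trace. -/
def lEvents (l : ℕ) (τ : Trace) : Trace :=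
  τ.filter fun f => decide ((ev f).op = Op.acq l) || decide ((ev f).op = Op.rel l)

/-- Value contributed by the last l-event. -/
def lVal (l : ℕ) (f : ℕ) : Option ℕ :=
  if (ev f).op = Op.acq l then some (ev f).thread else none

theorem step_eq_of_not_lEvent {h : ℕ → Option ℕ} {e l : ℕ}
    (h1 : (ev e).op ≠ Op.acq l) (h2 : (ev e).op ≠ Op.rel l) :
    step ev h e l = h l := by
  unfold step
  cases hop : (ev e).op with
  | acq l' =>
    have : l' ≠ l := by rintro rfl; exact h1 hop
    exact Function.update_of_ne (Ne.symm this) _ _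
  | rel l' =>
    have : l' ≠ l := by rintro rfl; exact h2 hop
    exact Function.update_of_ne (Ne.symm this) _ _
  | _ => rfl

theorem runState_eq_lastLock (l : ℕ) (τ : Trace) (h : ℕ → Option ℕ) :
    runState ev h τ l =
      match (lEvents ev l τ).getLast? with
      | none => h l
      | some f => lVal ev l f := by
  induction τ using List.reverseRecOn with
  | nil => rfl
  | append_singleton t e ih =>
    rw [runState_concat]
    unfold lEvents
    rw [List.filter_append]
    by_cases he : ((ev e).op = Op.acq l) ∨ ((ev e).op = Op.rel l)
    · have hfe : (List.filter (fun f => decide ((ev f).op = Op.acq l) || decide ((ev f).op = Op.rel l)) [e]) = [e] := by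
        simp only [List.filter_cons, List.filter_nil]
        rcases he with he | he <;> simp [he]
      rw [hfe, List.getLast?_append]
      simp only [List.getLast?_singleton, Option.or]
      unfold step lVal
      rcases he with he | he <;> rw [he] <;> simp [he]
    · push_neg at he
      have hfe : (List.filter (fun f => decide ((ev f).op = Op.acq l) || decide ((ev f).op = Op.rel l)) [e]) = [] := by
        simp [he.1, he.2]
      rw [hfe, List.append_nil, step_eq_of_not_lEvent ev he.1 he.2]
      exact ih

/-! ### HB basic facts -/

theorem trord_trans {σ : Trace} {a b c : ℕ} (h1 : trord σ a b) (h2 : trord σ b c) :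
    trord σ a c :=
  ⟨h1.1, h2.2.1, le_trans h1.2.2 h2.2.2⟩

theorem HB.trord {σ : Trace} {a b : ℕ} (h : HB ev σ a b) : trord σ a b := by
  induction h with
  | thread_order h => exact h.1
  | rel_acq h _ _ => exact h
  | trans _ _ ih1 ih2 => exact trord_trans ih1 ih2

theorem eq_of_trord_trord {σ : Trace} (hn : σ.Nodup) {a b : ℕ}
    (h1 : trord σ a b) (h2 : trord σ b a) : a = b :=
  (List.idxOf_inj h1.1).1 (le_antisymm h1.2.2 h2.2.2)

theorem idxOf_append_cons_self {l1 l2 : List ℕ} {x : ℕ} (h : x ∉ l1) :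
    (l1 ++ x :: l2).idxOf x = l1.length := by
  induction l1 with
  | nil => simp [List.idxOf_cons_self]
  | cons c t ih =>
    have hxc : c ≠ x := fun hh => h (hh ▸ List.mem_cons_self)
    rw [List.cons_append, List.idxOf_cons_ne _ hxc,
      ih (fun hx => h (List.mem_cons_of_mem _ hx))]
    rfl

theorem decomp_idxOf {l : List ℕ} {x : ℕ} (h : x ∈ l) :
    l = l.take (l.idxOf x) ++ x :: l.drop (l.idxOf x + 1) := by
  have hlt : l.idxOf x < l.length := List.idxOf_lt_length_iff.2 h
  conv_lhs => rw [← List.take_append_drop (l.idxOf x) l]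
  rw [List.drop_eq_getElem_cons hlt, List.getElem_idxOf hlt]

theorem mem_of_getLast?' {l : List ℕ} {a : ℕ} (h : l.getLast? = some a) : a ∈ l := by
  rcases List.getLast?_eq_some_iff.1 h with ⟨l', rfl⟩; simp

theorem filter_comm' (p q : ℕ → Bool) (l : List ℕ) :
    (l.filter q).filter p = (l.filter p).filter q := by
  rw [List.filter_filter, List.filter_filter]; simp [Bool.and_comm]

theorem lEvents_filter (l : ℕ) (p : ℕ → Bool) (τ : Trace) :
    lEvents ev l (τ.filter p) = (lEvents ev l τ).filter p := by
  unfold lEvents; exact filter_comm' _ _ _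

theorem mem_lEvents {l f : ℕ} {τ : Trace} (h : f ∈ lEvents ev l τ) :
    f ∈ τ ∧ ((ev f).op = Op.acq l ∨ (ev f).op = Op.rel l) := by
  have := List.mem_filter.1 h
  simpa using this

theorem runState_lastLock_none {l : ℕ} {τ : Trace}
    (h : (lEvents ev l τ).getLast? = none) (h0 : ℕ → Option ℕ) :
    runState ev h0 τ l = h0 l := by
  rw [runState_eq_lastLock, h]

theorem runState_lastLock_some {l f : ℕ} {τ : Trace}
    (h : (lEvents ev l τ).getLast? = some f) (h0 : ℕ → Option ℕ) :
    runState ev h0 τ l = lVal ev l f := by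
  rw [runState_eq_lastLock, h]

/-- The key construction: filtering a well-formed trace by a set of events
closed under happens-before (within the trace) and under last-writes yields a
correct reordering. -/
theorem reorder_of_closed (σ : Trace) (hnd : σ.Nodup)
    (hlk : lockOk ev (fun _ => none) σ) (S : ℕ → Prop) [DecidablePred S]
    (hHBcl : ∀ f g : ℕ, f ∈ σ → HB ev σ f g → S g → S f)
    (hlwcl : ∀ x locx wl : ℕ, S x → x ∈ σ → (ev x).op = Op.read locx →
      ((σ.take (σ.idxOf x)).filter
        (fun f => decide ((ev f).op = Op.write locx))).getLast? = some wl → S wl) :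
    CorrectReordering ev σ (σ.filter (fun f => decide (S f))) := by
  set p : ℕ → Bool := fun f => decide (S f) with hp
  have hmem : ∀ f, f ∈ σ.filter p ↔ f ∈ σ ∧ S f := by
    intro f; rw [List.mem_filter, hp]; simp only [decide_eq_true_eq]
  have hndρ : (σ.filter p).Nodup := hnd.filter p
  have hpre : ∀ {τ1 τ2 : Trace} {x : ℕ}, σ.filter p = τ1 ++ x :: τ2 →
      τ1 = (σ.take (σ.idxOf x)).filter p ∧ x ∈ σ ∧ S x := by
    intro τ1 τ2 x heq
    have hxρ : x ∈ σ.filter p := by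
      rw [heq]; exact List.mem_append_right _ List.mem_cons_self
    have hxS := (hmem x).1 hxρ
    have hxτ1 : x ∉ τ1 := fun hm =>
      (List.disjoint_of_nodup_append (heq ▸ hndρ)) hm List.mem_cons_self
    have h1 : (σ.filter p).idxOf x = τ1.length := by
      rw [heq]; exact idxOf_append_cons_self hxτ1
    have h2 : (σ.filter p).take ((σ.filter p).idxOf x) = τ1 := by
      rw [h1, heq]; exact List.take_left
    exact ⟨by rw [← h2]; exact take_idxOf_filter hnd p hxρ, hxS.1, hxS.2⟩
  refine ⟨⟨hndρ, ?_⟩, fun e he => ((hmem e).1 he).1, ?_, ?_⟩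
  · -- lockOk
    rw [lockOk_iff_splits ev]
    intro τ1 x τ2 heq
    obtain ⟨hτ1, hxσ, hxS⟩ := hpre heq
    subst hτ1
    have hσok := (lockOk_iff_splits ev).1 hlk _ x _ (decomp_idxOf hxσ)
    cases hop : (ev x).op with
    | read _ => simp [okAt, hop]
    | write _ => simp [okAt, hop]
    | acq l =>
      simp only [okAt, hop] at hσok ⊢
      cases hlast : (lEvents ev l (σ.take (σ.idxOf x))).getLast? with
      | none =>
        have hnil : lEvents ev l (σ.take (σ.idxOf x)) = [] :=
          List.getLast?_eq_none_iff.1 hlast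
        have hnil' : (lEvents ev l ((σ.take (σ.idxOf x)).filter p)).getLast? = none := by
          rw [lEvents_filter, hnil]; rfl
        rw [runState_lastLock_none ev hnil']
      | some f =>
        rw [runState_lastLock_some ev hlast] at hσok
        have hfL := mem_lEvents ev (mem_of_getLast?' hlast)
        have hopf : (ev f).op = Op.rel l := by
          rcases hfL.2 with h | h
          · rw [lVal, if_pos h] at hσok; exact absurd hσok (by simp)
          · exact h
        have hfσ : f ∈ σ := List.mem_of_mem_take hfL.1
        have hflt : σ.idxOf f < σ.idxOf x := idxOf_lt_of_mem_take hfL.1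
        have hHBfx : HB ev σ f x :=
          HB.rel_acq ⟨hfσ, hxσ, le_of_lt hflt⟩ hopf hop
        have hSf : S f := hHBcl f x hfσ hHBfx hxS
        have hlast' : (lEvents ev l ((σ.take (σ.idxOf x)).filter p)).getLast? = some f := by
          rw [lEvents_filter]; exact getLast?_filter p hlast (decide_eq_true hSf)
        rw [runState_lastLock_some ev hlast', lVal, if_neg (by rw [hopf]; simp)]
    | rel l =>
      simp only [okAt, hop] at hσok ⊢
      cases hlast : (lEvents ev l (σ.take (σ.idxOf x))).getLast? with
      | none =>
        rw [runState_lastLock_none ev hlast] at hσok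
        exact absurd hσok (by simp)
      | some f =>
        rw [runState_lastLock_some ev hlast] at hσok
        have hfL := mem_lEvents ev (mem_of_getLast?' hlast)
        have hopf : (ev f).op = Op.acq l := by
          rcases hfL.2 with h | h
          · exact h
          · rw [lVal, if_neg (by rw [h]; simp)] at hσok
            exact absurd hσok (by simp)
        have hthf : (ev f).thread = (ev x).thread := by
          rw [lVal, if_pos hopf] at hσok
          exact Option.some.inj hσok
        have hfσ : f ∈ σ := List.mem_of_mem_take hfL.1
        have hflt : σ.idxOf f < σ.idxOf x := idxOf_lt_of_mem_take hfL.1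
        have hHBfx : HB ev σ f x :=
          HB.thread_order ⟨⟨hfσ, hxσ, le_of_lt hflt⟩, hthf⟩
        have hSf : S f := hHBcl f x hfσ hHBfx hxS
        have hlast' : (lEvents ev l ((σ.take (σ.idxOf x)).filter p)).getLast? = some f := by
          rw [lEvents_filter]; exact getLast?_filter p hlast (decide_eq_true hSf)
        rw [runState_lastLock_some ev hlast', lVal, if_pos hopf, hthf]
  · -- to_closed
    intro f g hTO hgρ
    have hg := (hmem g).1 hgρ
    have hSf : S f := hHBcl f g hTO.1.1 (HB.thread_order hTO) hg.2
    have hfρ : f ∈ σ.filter p := (hmem f).2 ⟨hTO.1.1, hSf⟩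
    exact ⟨hfρ, ⟨hfρ, hgρ, (idxOf_filter_le_iff hnd p hfρ hgρ).2 hTO.1.2.2⟩, hTO.2⟩
  · -- lw_eq
    rintro x hxρ ⟨locx, hop⟩
    have hxS := (hmem x).1 hxρ
    simp only [lw, hop]
    rw [take_idxOf_filter hnd p hxρ,
      filter_comm' (fun f => decide ((ev f).op = Op.write locx)) p]
    cases hW : ((σ.take (σ.idxOf x)).filter
        (fun f => decide ((ev f).op = Op.write locx))).getLast? with
    | none => rw [List.getLast?_eq_none_iff.1 hW]; rfl
    | some wl =>
      have hSwl := hlwcl x locx wl hxS.2 hxS.1 hop hW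
      rw [getLast?_filter p hW (decide_eq_true hSwl)]

/-- The set of events strictly happens-before one of the two race events. -/
def raceS (σ : Trace) (e1 e2 : ℕ) (f : ℕ) : Prop :=
  f ∈ σ ∧ (HB ev σ f e1 ∨ HB ev σ f e2) ∧ f ≠ e1 ∧ f ≠ e2

end RaceProof

open Race RaceProof in
/-- soundness of HB races.  If a well-formed trace contains a
pair of conflicting events that is an HB race, then it contains a predictive
race: a pair of conflicting events both enabled in some correct reordering. -/
theorem hb_race_implies_predictive_race (ev : ℕ → EventData) (σ : Trace)
    (hwf : WellFormed ev σ)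
    (hhb : ∃ e1 e2 : ℕ, HBRace ev σ e1 e2) :
    ∃ e1 e2 : ℕ, PredictiveRace ev σ e1 e2 := by
  classical
  obtain ⟨hnd, hlk⟩ := hwf
  have horient : ∃ n : ℕ, ∃ a b : ℕ,
      HBRace ev σ a b ∧ σ.idxOf a < σ.idxOf b ∧ σ.idxOf b = n := by
    obtain ⟨a, b, ha, hb, ⟨hth, hloc, hw⟩, h4, h5⟩ := hhb
    have hab : a ≠ b := fun h => hth (h ▸ rfl)
    have hne : σ.idxOf a ≠ σ.idxOf b := fun h => hab ((List.idxOf_inj ha).1 h)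
    rcases lt_or_gt_of_ne hne with h | h
    · exact ⟨_, a, b, ⟨ha, hb, ⟨hth, hloc, hw⟩, h4, h5⟩, h, rfl⟩
    · obtain ⟨x, hx1, hx2⟩ := hloc
      exact ⟨_, b, a, ⟨hb, ha, ⟨Ne.symm hth, ⟨x, hx2, hx1⟩, hw.symm⟩, h5, h4⟩, h, rfl⟩
  obtain ⟨e1, e2, hrace, hlt12, hidx2⟩ := Nat.find_spec horient
  obtain ⟨he1σ, he2σ, hconf, hnhb12, hnhb21⟩ := hrace
  -- the closed set of events
  have hSHB : ∀ f g : ℕ, f ∈ σ → HB ev σ f g → raceS ev σ e1 e2 g → raceS ev σ e1 e2 f := by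
    intro f g hfσ hfg hg
    obtain ⟨hgσ, hgor, hg1, hg2⟩ := hg
    have h1 : f ≠ e1 := by
      rintro rfl
      rcases hgor with h | h
      · exact hg1 (eq_of_trord_trord hnd (HB.trord ev h) (HB.trord ev hfg))
      · exact hnhb12 (HB.trans hfg h)
    have h2 : f ≠ e2 := by
      rintro rfl
      rcases hgor with h | h
      · exact hnhb21 (HB.trans hfg h)
      · exact hg2 (eq_of_trord_trord hnd (HB.trord ev h) (HB.trord ev hfg))
    refine ⟨hfσ, ?_, h1, h2⟩
    rcases hgor with h | h
    · exact Or.inl (HB.trans hfg h)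
    · exact Or.inr (HB.trans hfg h)
  have hlwcl : ∀ x locx wl : ℕ, raceS ev σ e1 e2 x → x ∈ σ → (ev x).op = Op.read locx →
      ((σ.take (σ.idxOf x)).filter
        (fun f => decide ((ev f).op = Op.write locx))).getLast? = some wl →
      raceS ev σ e1 e2 wl := by
    intro x locx wl hSx hxσ hop hW
    have hwlW := List.mem_filter.1 (mem_of_getLast?' hW)
    have hopwl : (ev wl).op = Op.write locx := by simpa using hwlW.2
    have hwlσ : wl ∈ σ := List.mem_of_mem_take hwlW.1
    have hwlt : σ.idxOf wl < σ.idxOf x := idxOf_lt_of_mem_take hwlW.1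
    have hHBwx : HB ev σ wl x := by
      by_contra hn1
      have hthne : (ev wl).thread ≠ (ev x).thread := fun h =>
        hn1 (HB.thread_order ⟨⟨hwlσ, hxσ, le_of_lt hwlt⟩, h⟩)
      have hn2 : ¬ HB ev σ x wl := fun h =>
        absurd (HB.trord ev h).2.2 (not_le.2 hwlt)
      have hrace' : HBRace ev σ wl x :=
        ⟨hwlσ, hxσ, ⟨hthne, ⟨locx, by rw [hopwl]; rfl, by rw [hop]; rfl⟩,
          Or.inl ⟨locx, hopwl⟩⟩, hn1, hn2⟩
      have hxlt : σ.idxOf x < Nat.find horient := by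
        rw [← hidx2]
        rcases hSx.2.1 with h | h
        · exact lt_of_le_of_lt (HB.trord ev h).2.2 hlt12
        · exact lt_of_le_of_ne (HB.trord ev h).2.2
            (fun hh => hSx.2.2.2 ((List.idxOf_inj hxσ).1 hh))
      exact Nat.find_min horient hxlt ⟨wl, x, hrace', hwlt, rfl⟩
    exact hSHB wl x hwlσ hHBwx hSx
  have hCR := reorder_of_closed ev σ hnd hlk (raceS ev σ e1 e2) hSHB hlwcl
  set ρ : Trace := σ.filter (fun f => decide (raceS ev σ e1 e2 f)) with hρ
  have hmem : ∀ f, f ∈ ρ ↔ f ∈ σ ∧ raceS ev σ e1 e2 f := by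
    intro f; rw [hρ, List.mem_filter]; simp only [decide_eq_true_eq]
  have hEn1 : Enabled ev σ ρ e1 := by
    refine ⟨he1σ, fun h => ((hmem e1).1 h).2.2.2.1 rfl, fun f hTO hne => ?_⟩
    refine (hmem f).2 ⟨hTO.1.1, hTO.1.1, Or.inl (HB.thread_order hTO), hne, ?_⟩
    rintro rfl
    exact hconf.1 hTO.2.symm
  have hEn2 : Enabled ev σ ρ e2 := by
    refine ⟨he2σ, fun h => ((hmem e2).1 h).2.2.2.2 rfl, fun f hTO hne => ?_⟩
    refine (hmem f).2 ⟨hTO.1.1, hTO.1.1, Or.inr (HB.thread_order hTO), ?_, hne⟩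
    rintro rfl
    exact hconf.1 hTO.2
  exact ⟨e1, e2, he1σ, he2σ, hconf, ρ, hCR, hEn1, hEn2⟩
end

section
/- Let σ be a trace and let 0 ≤ i < j < |σ| be indices such that σ[i] and σ[j] are conflicting events. Then (σ[i], σ[j]) is an HB race in σ if and only if (σ[i], σ[j]) is an HB race in the subtrace σ[i:j], where the HB race condition in σ[i:j] is evaluated with respect to the happens-before order of σ[i:j]. -/
open Race in
lemma Race.HB.to_trord {ev : ℕ → EventData} {σ : Trace} {e1 e2 : ℕ}
    (h : HB ev σ e1 e2) : trord σ e1 e2 := by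
  induction h with
  | thread_order h => exact h.1
  | rel_acq h _ _ => exact h
  | trans _ _ ih1 ih2 => exact ⟨ih1.1, ih2.2.1, le_trans ih1.2.2 ih2.2.2⟩

open Race in
/-- locality of HB races, both directions.  For a trace `σ`
and indices `i < j` such that `σ[i]` and `σ[j]` are conflicting, `(σ[i], σ[j])`
is an HB race in `σ` iff it is an HB race in the subtrace `σ[i:j]`, with the HB
race condition evaluated with respect to the happens-before order of `σ[i:j]`. -/
theorem hb_race_locality_iff (ev : ℕ → EventData) (σ : Trace)
    (hnd : σ.Nodup) (i j : ℕ) (hij : i < j) (hj : j < σ.length)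
    (hconf : Conflicting ev (σ.getD i 0) (σ.getD j 0)) :
    HBRace ev σ (σ.getD i 0) (σ.getD j 0) ↔
      HBRace ev ((σ.drop i).take (j - i + 1)) (σ.getD i 0) (σ.getD j 0) := by
  set σ' : Trace := (σ.drop i).take (j - i + 1) with hσ'
  have hi : i < σ.length := lt_trans hij hj
  -- index/membership transfer lemmas
  have hidx : ∀ e ∈ σ', e ∈ σ ∧ σ.idxOf e = i + σ'.idxOf e ∧ σ'.idxOf e ≤ j - i := by
    intro e he
    have hk : σ'.idxOf e < σ'.length := List.idxOf_lt_length_iff.2 he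
    set k := σ'.idxOf e with hkdef
    have hklen : k < j - i + 1 := by
      have h := hk; rw [hσ', List.length_take] at h; omega
    have h1 : σ'[k]? = some e := by
      rw [List.getElem?_eq_getElem hk]
      exact congrArg some (List.getElem_idxOf hk)
    have h2 : σ[i + k]? = some e := by
      rw [hσ', List.getElem?_take_of_lt hklen, List.getElem?_drop] at h1
      exact h1
    have hlen : i + k < σ.length := by
      by_contra hcon
      rw [List.getElem?_eq_none (le_of_not_gt hcon)] at h2
      exact Option.some_ne_none e h2.symm
    have h3 : σ[i + k] = e := by
      rw [List.getElem?_eq_getElem hlen] at h2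
      exact Option.some.inj h2
    have h4 : σ.idxOf e = i + k := by
      rw [← h3]; exact List.Nodup.idxOf_getElem hnd (i + k) hlen
    exact ⟨h3 ▸ List.getElem_mem hlen, h4, Nat.lt_succ_iff.mp hklen⟩
  have hmem : ∀ e, e ∈ σ → i ≤ σ.idxOf e → σ.idxOf e ≤ j → e ∈ σ' := by
    intro e he h1 h2
    have hp : σ.idxOf e < σ.length := List.idxOf_lt_length_iff.2 he
    have hpe : σ[σ.idxOf e]? = some e := by
      rw [List.getElem?_eq_getElem hp]
      exact congrArg some (List.getElem_idxOf hp)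
    have h5 : σ'[σ.idxOf e - i]? = some e := by
      rw [hσ', List.getElem?_take_of_lt (by omega), List.getElem?_drop,
        show i + (σ.idxOf e - i) = σ.idxOf e by omega]
      exact hpe
    exact List.mem_of_getElem? h5
  -- σ[i] and σ[j] with their indices
  have hgi : σ.getD i 0 = σ[i] := List.getD_eq_getElem σ 0 hi
  have hgj : σ.getD j 0 = σ[j] := List.getD_eq_getElem σ 0 hj
  have hii : σ.idxOf (σ.getD i 0) = i := by rw [hgi]; exact List.Nodup.idxOf_getElem hnd i hi
  have hjj : σ.idxOf (σ.getD j 0) = j := by rw [hgj]; exact List.Nodup.idxOf_getElem hnd j hj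
  have hmi : σ.getD i 0 ∈ σ := by rw [hgi]; exact List.getElem_mem hi
  have hmj : σ.getD j 0 ∈ σ := by rw [hgj]; exact List.getElem_mem hj
  have hmi' : σ.getD i 0 ∈ σ' := hmem _ hmi (by omega) (by omega)
  have hmj' : σ.getD j 0 ∈ σ' := hmem _ hmj (by omega) (by omega)
  -- trace-order transfer
  have ht1 : ∀ e1 e2, trord σ' e1 e2 → trord σ e1 e2 := by
    intro e1 e2 ⟨h1, h2, h3⟩
    obtain ⟨m1, i1, _⟩ := hidx e1 h1
    obtain ⟨m2, i2, _⟩ := hidx e2 h2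
    exact ⟨m1, m2, by omega⟩
  have ht2 : ∀ e1 e2, e1 ∈ σ' → e2 ∈ σ' → trord σ e1 e2 → trord σ' e1 e2 := by
    intro e1 e2 h1 h2 ⟨_, _, h3⟩
    obtain ⟨m1, i1, _⟩ := hidx e1 h1
    obtain ⟨m2, i2, _⟩ := hidx e2 h2
    exact ⟨h1, h2, by omega⟩
  -- HB transfer
  have hb1 : ∀ e1 e2, HB ev σ' e1 e2 → HB ev σ e1 e2 := by
    intro e1 e2 h
    induction h with
    | thread_order h => exact HB.thread_order ⟨ht1 _ _ h.1, h.2⟩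
    | rel_acq h ha hb => exact HB.rel_acq (ht1 _ _ h) ha hb
    | trans _ _ ih1 ih2 => exact HB.trans ih1 ih2
  have hb2 : ∀ e1 e2, HB ev σ e1 e2 → e1 ∈ σ' → e2 ∈ σ' → HB ev σ' e1 e2 := by
    intro e1 e2 h
    induction h with
    | thread_order h => exact fun m1 m2 => HB.thread_order ⟨ht2 _ _ m1 m2 h.1, h.2⟩
    | rel_acq h ha hb => exact fun m1 m2 => HB.rel_acq (ht2 _ _ m1 m2 h) ha hb
    | @trans a b c h1 h2 ih1 ih2 =>
      intro m1 m2
      have hb' : b ∈ σ' := by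
        obtain ⟨_, ib, hab⟩ := h1.to_trord
        obtain ⟨_, _, hbc⟩ := h2.to_trord
        obtain ⟨_, ia, la⟩ := hidx a m1
        obtain ⟨_, ic, lc⟩ := hidx c m2
        exact hmem b ib (by omega) (by omega)
      exact HB.trans (ih1 m1 hb') (ih2 hb' m2)
  constructor
  · rintro ⟨_, _, hc, h1, h2⟩
    exact ⟨hmi', hmj', hc, fun h => h1 (hb1 _ _ h), fun h => h2 (hb1 _ _ h)⟩
  · rintro ⟨_, _, hc, h1, h2⟩
    exact ⟨hmi, hmj, hc, fun h => h1 (hb2 _ _ h hmi' hmj'),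
      fun h => h2 (hb2 _ _ h hmj' hmi')⟩
end

section
/- For any trace σ and any events e1, e2 ∈ E_σ, e1 ⪯HB e2 if and only if ctimeσ(e1) ⊑ ctimeσ(e2). -/
open Race in
private lemma ltime_lt_of_lt (ev : ℕ → EventData) (σ : Trace) (f e : ℕ) (hf : f ∈ σ)
    (ht : (ev f).thread = (ev e).thread) (h : σ.idxOf f < σ.idxOf e) :
    ltime ev σ f < ltime ev σ e := by
  unfold ltime
  rw [ht]
  set p : ℕ → Bool := fun g => decide ((ev g).thread = (ev e).thread) with hp
  have hi : σ.idxOf f < σ.length := List.idxOf_lt_length_iff.2 hf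
  have h1 : σ.take (σ.idxOf f + 1) = σ.take (σ.idxOf f) ++ [f] := by
    rw [List.take_succ]
    simp [List.getElem?_eq_getElem hi, List.getElem_idxOf hi]
  have hsub : σ.take (σ.idxOf f + 1) <+: σ.take (σ.idxOf e) := by
    have := List.take_prefix (σ.idxOf f + 1) (σ.take (σ.idxOf e))
    rwa [List.take_take, min_eq_left h] at this
  have h2 : ((σ.take (σ.idxOf f + 1)).filter p).length
      ≤ ((σ.take (σ.idxOf e)).filter p).length :=
    (hsub.sublist.filter p).length_le
  have hpf : p f = true := by simp [hp, ht]
  rw [h1, List.filter_append, List.length_append] at h2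
  simp [List.filter, hpf] at h2
  omega

open Race in
private lemma ctime_set_finite (ev : ℕ → EventData) (σ : Trace) (e t : ℕ) :
    (insert (-1)
      {n : ℤ | ∃ f ∈ σ, (ev f).thread = t ∧ HB ev σ f e ∧ n = (ltime ev σ f : ℤ)}).Finite := by
  apply Set.Finite.insert
  apply Set.Finite.subset (σ.toFinset.finite_toSet.image fun f => ((ltime ev σ f : ℤ)))
  rintro n ⟨f, hf, -, -, rfl⟩
  exact ⟨f, by simpa using hf, rfl⟩

open Race in
/-- for events `e1, e2` of a trace `σ`, `e1 ⪯HB e2` iff the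
causal timestamp of `e1` is pointwise below that of `e2`. -/
theorem hb_iff_ctime_le (ev : ℕ → EventData) (σ : Trace) (hnd : σ.Nodup)
    (e1 e2 : ℕ) (h1 : e1 ∈ σ) (h2 : e2 ∈ σ) :
    HB ev σ e1 e2 ↔ ∀ t : ℕ, ctime ev σ e1 t ≤ ctime ev σ e2 t :=  by
  classical
  constructor
  · intro h t
    unfold ctime
    refine csSup_le_csSup ((ctime_set_finite ev σ e2 t).bddAbove) ⟨-1, Set.mem_insert _ _⟩ ?_
    intro n hn
    rcases hn with rfl | ⟨f, hf, hft, hfe, rfl⟩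
    · exact Set.mem_insert _ _
    · exact Set.mem_insert_of_mem _ ⟨f, hf, hft, HB.trans hfe h, rfl⟩
  · intro h
    have hT := h (ev e1).thread
    have hself : HB ev σ e1 e1 :=
      HB.thread_order ⟨⟨h1, h1, le_refl _⟩, rfl⟩
    have hbdd1 := (ctime_set_finite ev σ e1 (ev e1).thread).bddAbove
    have hmem : ((ltime ev σ e1 : ℤ)) ∈ insert (-1 : ℤ)
        {n : ℤ | ∃ f ∈ σ, (ev f).thread = (ev e1).thread ∧ HB ev σ f e1 ∧
          n = (ltime ev σ f : ℤ)} :=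
      Set.mem_insert_of_mem _ ⟨e1, h1, rfl, hself, rfl⟩
    have h1le : (ltime ev σ e1 : ℤ) ≤ ctime ev σ e1 (ev e1).thread := le_csSup hbdd1 hmem
    have h2le : (ltime ev σ e1 : ℤ) ≤ ctime ev σ e2 (ev e1).thread := h1le.trans hT
    have hmem2 : ctime ev σ e2 (ev e1).thread ∈ insert (-1 : ℤ)
        {n : ℤ | ∃ f ∈ σ, (ev f).thread = (ev e1).thread ∧ HB ev σ f e2 ∧
          n = (ltime ev σ f : ℤ)} :=
      Set.Nonempty.csSup_mem ⟨-1, Set.mem_insert _ _⟩ (ctime_set_finite ev σ e2 (ev e1).thread)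
    rcases hmem2 with heq | ⟨f, hf, hft, hfe, heq⟩
    · rw [heq] at h2le
      exfalso; omega
    · rw [heq] at h2le
      have hle : σ.idxOf e1 ≤ σ.idxOf f := by
        by_contra hc
        push_neg at hc
        exact absurd (Int.ofNat_le.1 h2le) (ltime_lt_of_lt ev σ f e1 hf hft hc).not_ge
      exact HB.trans (HB.thread_order ⟨⟨h1, hf, hle⟩, hft.symm⟩) hfe
end

section
/- There exist a well-formed subtrace σ that begins with an event e1 and ends with an event e2, and well-formed traces σ1 and σ2, such that σ occurs as a contiguous subtrace of both σ1 and σ2, (e1, e2) is a sync-preserving race in σ2, and (e1, e2) is not a sync-preserving race in σ1. -/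
section Aux

open Race

/-- Boolean version of `lockOk`. -/
def lockOkB (ev : ℕ → EventData) : (ℕ → Option ℕ) → Trace → Bool
  | _, [] => true
  | h, e :: rest =>
    match (ev e).op with
    | Op.acq l => (h l == none) && lockOkB ev (Function.update h l (some (ev e).thread)) rest
    | Op.rel l => (h l == some (ev e).thread) && lockOkB ev (Function.update h l none) rest
    | _ => lockOkB ev h rest

theorem lockOk_iff_lockOkB (ev : ℕ → EventData) :
    ∀ (σ : Trace) (h : ℕ → Option ℕ), Race.lockOk ev h σ ↔ lockOkB ev h σ = true := by
  intro σ
  induction σ with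
  | nil => intro h; simp [Race.lockOk, lockOkB]
  | cons e rest ih =>
    intro h
    rcases hop : (ev e).op with x | x | l | l <;>
      simp [Race.lockOk, lockOkB, hop, ih]

instance lockOk.decidable (ev : ℕ → EventData) (h : ℕ → Option ℕ) (σ : Trace) :
    Decidable (Race.lockOk ev h σ) :=
  decidable_of_iff _ (lockOk_iff_lockOkB ev σ h).symm

instance trord.decidable (σ : Trace) (a b : ℕ) : Decidable (Race.trord σ a b) :=
  inferInstanceAs (Decidable (a ∈ σ ∧ b ∈ σ ∧ σ.idxOf a ≤ σ.idxOf b))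

instance threadOrd.decidable (ev : ℕ → EventData) (σ : Trace) (a b : ℕ) :
    Decidable (Race.threadOrd ev σ a b) :=
  inferInstanceAs (Decidable (Race.trord σ a b ∧ (ev a).thread = (ev b).thread))

theorem mem_of_lw (ev : ℕ → EventData) (σ : Trace) (e f : ℕ)
    (h : Race.lw ev σ e = some f) : f ∈ σ := by
  unfold Race.lw at h
  rcases hop : (ev e).op with x | x | l | l <;> rw [hop] at h <;>
    first
      | exact List.mem_of_mem_take
          (List.mem_of_mem_filter (List.mem_of_getLast? h))
      | exact absurd h (by simp)

/-- The global event data for the counterexample. -/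
def evL : List EventData :=
  [⟨2, Op.acq 0⟩, ⟨2, Op.write 1⟩, ⟨0, Op.write 0⟩, ⟨0, Op.write 2⟩,
   ⟨2, Op.read 2⟩, ⟨2, Op.rel 0⟩, ⟨1, Op.read 1⟩, ⟨1, Op.acq 0⟩,
   ⟨1, Op.rel 0⟩, ⟨1, Op.write 0⟩, ⟨2, Op.acq 0⟩, ⟨3, Op.write 1⟩]

def ev0 : ℕ → EventData := fun n => evL.getD n ⟨4, Op.read 5⟩

end Aux

set_option maxRecDepth 100000 in
open Race in
/-- non-locality of sync-preserving races.  There are a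
well-formed subtrace `σ` beginning with `e1` and ending with `e2`, and
well-formed traces `σ1`, `σ2`, each containing `σ` as a contiguous subtrace,
such that `(e1, e2)` is a sync-preserving race in `σ2` but not in `σ1`. -/
theorem syncpres_race_not_local :
    ∃ (ev : ℕ → EventData) (σ pre1 suf1 pre2 suf2 : Trace) (e1 e2 : ℕ),
      σ.head? = some e1 ∧ σ.getLast? = some e2 ∧
      WellFormedSub ev σ ∧
      WellFormed ev (pre1 ++ σ ++ suf1) ∧
      WellFormed ev (pre2 ++ σ ++ suf2) ∧
      Conflicting ev e1 e2 ∧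
      SyncPresRace ev (pre2 ++ σ ++ suf2) e1 e2 ∧
      ¬ SyncPresRace ev (pre1 ++ σ ++ suf1) e1 e2 := by
  refine ⟨ev0, [2,3,4,5,6,7,8,9], [0,1], [], [10,11], [], 2, 9, rfl, rfl,
    ⟨[10,11], [], ⟨by decide, by decide⟩⟩, ⟨by decide, by decide⟩, ⟨by decide, by decide⟩,
    ⟨by decide, ⟨0, rfl, rfl⟩, Or.inl ⟨0, rfl⟩⟩, ?pos, ?neg⟩
  case pos =>
    -- the sync-preserving race in σ2 = [10,11,2,3,4,5,6,7,8,9], witnessed by ρ = [11,6,7,8]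
    refine ⟨by decide, by decide, ⟨by decide, ⟨0, rfl, rfl⟩, Or.inl ⟨0, rfl⟩⟩,
      [11, 6, 7, 8], ⟨⟨by decide, by decide⟩, by decide, ?tc, ?lw⟩, ?sp, ?en1, ?en2⟩
    case tc =>
      intro a b h hb
      have key : ∀ a ∈ ([10,11,2,3,4,5,6,7,8,9] : Trace), ∀ b ∈ ([11,6,7,8] : Trace),
          Race.threadOrd ev0 [10,11,2,3,4,5,6,7,8,9] a b →
          a ∈ ([11,6,7,8] : Trace) ∧ Race.threadOrd ev0 [11,6,7,8] a b := by decide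
      exact key a h.1.1 b hb h
    case lw =>
      intro e he _
      have key : ∀ e ∈ ([11,6,7,8] : Trace),
          Race.lw ev0 [11,6,7,8] e = Race.lw ev0 [10,11,2,3,4,5,6,7,8,9] e := by decide
      exact key e he
    case sp =>
      have acq7 : ∀ a ∈ ([11,6,7,8] : Trace), ∀ l : ℕ,
          (ev0 a).op = Op.acq l → a = 7 ∧ l = 0 := by
        intro a ha l hop
        fin_cases ha
        · exact absurd (show Op.write 1 = Op.acq l from hop) (by simp)
        · exact absurd (show Op.read 1 = Op.acq l from hop) (by simp)
        · have h' : Op.acq 0 = Op.acq l := hop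
          injection h' with h'
          exact ⟨rfl, h'.symm⟩
        · exact absurd (show Op.rel 0 = Op.acq l from hop) (by simp)
      intro a1 a2 l h1 h2 hop1 hop2
      obtain ⟨rfl, rfl⟩ := acq7 a1 h1 l hop1
      obtain ⟨rfl, -⟩ := acq7 a2 h2 0 hop2
      constructor <;> intro <;> decide
    case en1 =>
      refine ⟨by decide, by decide, ?_⟩
      intro f h hne
      have key : ∀ f ∈ ([10,11,2,3,4,5,6,7,8,9] : Trace),
          Race.threadOrd ev0 [10,11,2,3,4,5,6,7,8,9] f 2 → f ≠ 2 →
          f ∈ ([11,6,7,8] : Trace) := by decide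
      exact key f h.1.1 h hne
    case en2 =>
      refine ⟨by decide, by decide, ?_⟩
      intro f h hne
      have key : ∀ f ∈ ([10,11,2,3,4,5,6,7,8,9] : Trace),
          Race.threadOrd ev0 [10,11,2,3,4,5,6,7,8,9] f 9 → f ≠ 9 →
          f ∈ ([11,6,7,8] : Trace) := by decide
      exact key f h.1.1 h hne
  case neg =>
    -- no sync-preserving race in σ1 = [0,1,2,3,4,5,6,7,8,9]
    rintro ⟨-, -, -, ρ, hcr, hsp, he1, he2⟩
    -- σ1 as a literal list
    have h2n : 2 ∉ ρ := he1.2.1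
    have h9n : 9 ∉ ρ := he2.2.1
    have h6 : 6 ∈ ρ := he2.2.2 6 (by decide) (by decide)
    have h7 : 7 ∈ ρ := he2.2.2 7 (by decide) (by decide)
    have h8 : 8 ∈ ρ := he2.2.2 8 (by decide) (by decide)
    have h3n : 3 ∉ ρ := fun h3 => h2n (hcr.to_closed 2 3 (by decide) h3).1
    have hlw6 : Race.lw ev0 ρ 6 = some 1 := by
      have := hcr.lw_eq 6 h6 ⟨1, rfl⟩
      rw [this]; decide
    have h1 : 1 ∈ ρ := mem_of_lw ev0 ρ 6 1 hlw6
    have h0 : 0 ∈ ρ := (hcr.to_closed 0 1 (by decide) h1).1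
    have h4n : 4 ∉ ρ := by
      intro h4
      have hlw4 : Race.lw ev0 ρ 4 = some 3 := by
        have := hcr.lw_eq 4 h4 ⟨2, rfl⟩
        rw [this]; decide
      exact h3n (mem_of_lw ev0 ρ 4 3 hlw4)
    have h5n : 5 ∉ ρ := fun h5 => h4n (hcr.to_closed 4 5 (by decide) h5).1
    -- ρ is a permutation of [0,1,6,7,8]
    have hsub : ρ ⊆ ([0,1,6,7,8] : Trace) := by
      intro a ha
      have h10 : a ∈ ([0,1,2,3,4,5,6,7,8,9] : Trace) := by simpa using hcr.subset a ha
      simp only [List.mem_cons, List.not_mem_nil, or_false] at h10 ⊢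
      rcases h10 with rfl | rfl | rfl | rfl | rfl | rfl | rfl | rfl | rfl | rfl
      · exact Or.inl rfl
      · exact Or.inr (Or.inl rfl)
      · exact absurd ha h2n
      · exact absurd ha h3n
      · exact absurd ha h4n
      · exact absurd ha h5n
      · exact Or.inr (Or.inr (Or.inl rfl))
      · exact Or.inr (Or.inr (Or.inr (Or.inl rfl)))
      · exact Or.inr (Or.inr (Or.inr (Or.inr rfl)))
      · exact absurd ha h9n
    have hsub2 : ([0,1,6,7,8] : Trace) ⊆ ρ := by
      intro a ha
      simp only [List.mem_cons, List.not_mem_nil, or_false] at ha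
      rcases ha with rfl | rfl | rfl | rfl | rfl
      exacts [h0, h1, h6, h7, h8]
    have hperm : ρ.Perm ([0,1,6,7,8] : Trace) :=
      (hcr.wf.1.subperm hsub).antisymm ((by decide : ([0,1,6,7,8] : Trace).Nodup).subperm hsub2)
    have hmem : ρ ∈ ([0,1,6,7,8] : Trace).permutations' := List.mem_permutations'.2 hperm
    -- order facts in ρ
    have t67 : Race.trord ρ 6 7 := (hcr.to_closed 6 7 (by decide) h7).2.1
    have t78 : Race.trord ρ 7 8 := (hcr.to_closed 7 8 (by decide) h8).2.1
    have t07 : Race.trord ρ 0 7 := (hsp 0 7 0 h0 h7 rfl rfl).mpr (by decide)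
    have main : ∀ ρ' ∈ ([0,1,6,7,8] : Trace).permutations',
        ¬ (Race.trord ρ' 6 7 ∧ Race.trord ρ' 7 8 ∧ Race.trord ρ' 0 7 ∧
            Race.lockOk ev0 (fun _ => none) ρ') := by decide
    exact main ρ hmem ⟨t67, t78, t07, hcr.wf.2⟩
end

section
/- Let t1, t2, t3 be pairwise distinct thread identifiers, x a memory location, and ℓ a lock. Let σ be the event sequence e1=(t1, w(x)), (t3, r(x)), (t3, rel(ℓ)), (t2, acq(ℓ)), (t2, rel(ℓ)), e2=(t2, w(x)), and let σ2 = (t3, acq(ℓ)) · σ. Then σ2 is a well-formed trace, SPIdeal_{σ2}(e1, e2) ∩ {e1, e2} = ∅, and (e1, e2) is a sync-preserving race in σ2. -/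
open Race in
/-- in the 7-event trace
`σ2 = (t3,acq ℓ) e1=(t1,w x) (t3,r x) (t3,rel ℓ) (t2,acq ℓ) (t2,rel ℓ)
e2=(t2,w x)` (with `e1` at position 1 and `e2` at position 6), `σ2` is
well-formed, `SPIdeal σ2 (e1,e2) ∩ {e1,e2} = ∅`, and `(e1,e2)` is a
sync-preserving race in `σ2`. -/
theorem sigma2_syncpres_race (t1 t2 t3 x l : ℕ)
    (h12 : t1 ≠ t2) (h13 : t1 ≠ t3) (h23 : t2 ≠ t3) :
    let L : List EventData :=
      [⟨t3, Op.acq l⟩, ⟨t1, Op.write x⟩, ⟨t3, Op.read x⟩, ⟨t3, Op.rel l⟩,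
       ⟨t2, Op.acq l⟩, ⟨t2, Op.rel l⟩, ⟨t2, Op.write x⟩]
    let ev : ℕ → EventData := fun i => L.getD i ⟨0, Op.read 0⟩
    let σ2 : Trace := List.range 7
    WellFormed ev σ2 ∧
    SPIdeal ev σ2 1 6 ∩ ({1, 6} : Set ℕ) = (∅ : Set ℕ) ∧
    SyncPresRace ev σ2 1 6 := by
  intro L ev σ2
  have hσ : σ2 = [0,1,2,3,4,5,6] := rfl
  have hev0 : ev 0 = ⟨t3, Op.acq l⟩ := rfl
  have hev1 : ev 1 = ⟨t1, Op.write x⟩ := rfl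
  have hev2 : ev 2 = ⟨t3, Op.read x⟩ := rfl
  have hev3 : ev 3 = ⟨t3, Op.rel l⟩ := rfl
  have hev4 : ev 4 = ⟨t2, Op.acq l⟩ := rfl
  have hev5 : ev 5 = ⟨t2, Op.rel l⟩ := rfl
  have hev6 : ev 6 = ⟨t2, Op.write x⟩ := rfl
  have hwf : WellFormed ev σ2 := by
    refine ⟨by decide, ?_⟩
    rw [hσ]
    simp [lockOk, hev0, hev1, hev2, hev3, hev4, hev5, hev6, Function.update_self]
  -- the witness closed set
  have hCclosed : SPClosed ev σ2 {n | n = 4 ∨ n = 5} := by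
    refine ⟨⟨?_, ?_, ?_⟩, ?_⟩
    · rintro e (rfl|rfl) <;> decide
    · rintro e1 e2 ⟨⟨hm1, hm2, hle⟩, hth⟩ he2
      have h7 : e1 < 7 := List.mem_range.mp hm1
      rcases he2 with rfl|rfl <;> interval_cases e1 <;>
        first
          | exact Or.inl rfl
          | exact Or.inr rfl
          | exact absurd hle (by decide)
          | exact absurd hth (Ne.symm h23)
          | exact absurd hth h12
    · rintro e (rfl|rfl) f hf <;>
        exact absurd (show (none : Option ℕ) = some f from hf) (by simp)
    · rintro a1 a2 l' (rfl|rfl) (rfl|rfl) hop1 hop2 htr hne r hr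
      · exact absurd rfl hne
      · exact absurd (show Op.acq l = Op.acq l' from hop1) (by
          intro h; exact absurd hop2 (by simp [hev5]))
      · simp [hev5] at hop1
      · simp [hev5] at hop1
  have hp1 : prevE ev σ2 1 = none := by
    simp [prevE, hσ, hev0, hev1, Ne.symm h13]
  have hp6 : prevE ev σ2 6 = some 5 := by
    simp [prevE, hσ, hev0, hev1, hev2, hev3, hev4, hev5, hev6, Ne.symm h23, h12]
  have hseed : {f : ℕ | prevE ev σ2 1 = some f ∨ prevE ev σ2 6 = some f} ⊆
      {n | n = 4 ∨ n = 5} := by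
    rintro f (hf|hf)
    · rw [hp1] at hf; cases hf
    · rw [hp6] at hf; exact Or.inr (Option.some.inj hf).symm
  have hsub : SPIdeal ev σ2 1 6 ⊆ {n | n = 4 ∨ n = 5} :=
    Set.sInter_subset_of_mem ⟨hCclosed, hseed⟩
  have hint : SPIdeal ev σ2 1 6 ∩ ({1, 6} : Set ℕ) = (∅ : Set ℕ) := by
    apply Set.eq_empty_iff_forall_notMem.mpr
    rintro y ⟨hy1, hy2⟩
    have h45 := hsub hy1
    simp only [Set.mem_insert_iff, Set.mem_singleton_iff] at hy2
    rcases h45 with rfl|rfl <;> rcases hy2 with h|h <;> omega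
  refine ⟨hwf, hint, by decide, by decide, ⟨h12, ⟨x, rfl, rfl⟩, Or.inl ⟨x, rfl⟩⟩,
    [4,5], ?_, ?_, ?_, ?_⟩
  · refine ⟨⟨by decide, ?_⟩, ?_, ?_, ?_⟩
    · simp [lockOk, hev4, hev5, Function.update_self]
    · intro e he
      simp only [List.mem_cons, List.not_mem_nil, or_false] at he
      rcases he with rfl|rfl <;> decide
    · intro e1 e2 hto hm
      obtain ⟨⟨hm1, _, hle⟩, hth⟩ := hto
      have h7 : e1 < 7 := List.mem_range.mp hm1
      simp only [List.mem_cons, List.not_mem_nil, or_false] at hm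
      rcases hm with rfl|rfl <;> interval_cases e1 <;>
        first
          | exact ⟨by decide, ⟨by decide, by decide, by decide⟩, rfl⟩
          | exact absurd hle (by decide)
          | exact absurd hth (Ne.symm h23)
          | exact absurd hth h12
    · intro e he hread
      simp only [List.mem_cons, List.not_mem_nil, or_false] at he
      obtain ⟨x', hx⟩ := hread
      rcases he with rfl|rfl <;> simp [hev4, hev5] at hx
  · intro a1 a2 l' ha1 ha2 hop1 hop2
    simp only [List.mem_cons, List.not_mem_nil, or_false] at ha1 ha2
    rcases ha1 with rfl|rfl
    · rcases ha2 with rfl|rfl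
      · constructor <;> intro _ <;> exact ⟨by decide, by decide, le_refl _⟩
      · simp [hev5] at hop2
    · simp [hev5] at hop1
  · refine ⟨by decide, by decide, ?_⟩
    intro f hf hne
    obtain ⟨⟨hm, _, hle⟩, hth⟩ := hf
    have h7 : f < 7 := List.mem_range.mp hm
    interval_cases f
    · exact absurd hth (Ne.symm h13)
    · exact absurd rfl hne
    all_goals exact absurd hle (by decide)
  · refine ⟨by decide, by decide, ?_⟩
    intro f hf hne
    obtain ⟨⟨hm, _, hle⟩, hth⟩ := hf
    have h7 : f < 7 := List.mem_range.mp hm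
    interval_cases f
    · exact absurd hth (Ne.symm h23)
    · exact absurd hth h12
    · exact absurd hth (Ne.symm h23)
    · exact absurd hth (Ne.symm h23)
    · decide
    · decide
    · exact absurd rfl hne
end

section
/- Let σ be a well-formed trace and let (e1, e2) be a conflicting pair in σ. For any well-formed trace σ' such that σ occurs as a contiguous subtrace of σ', (e1, e2) is a sync-preserving race in σ' if and only if (e1, e2) is a sync-preserving race in σ. -/
/-! ### Auxiliary machinery for the subtrace theorem -/

namespace Race

variable (ev : ℕ → EventData)

/-- Does event `e` touch lock `l`? -/
def touchesB (l e : ℕ) : Bool :=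
  decide ((ev e).op = Op.acq l) || decide ((ev e).op = Op.rel l)

/-- Valid alternation of lock events of lock `l`, starting from state `s`. -/
def Alt (l : ℕ) : Option ℕ → Trace → Prop
  | _, [] => True
  | none, e :: r => (ev e).op = Op.acq l ∧ Alt l (some (ev e).thread) r
  | some t, e :: r => (ev e).op = Op.rel l ∧ (ev e).thread = t ∧ Alt l none r

@[simp] theorem alt_nil (l : ℕ) (s : Option ℕ) : Alt ev l s [] := by
  cases s <;> simp [Alt]

@[simp] theorem alt_none_cons (l e : ℕ) (r : Trace) :
    Alt ev l none (e :: r) ↔ (ev e).op = Op.acq l ∧ Alt ev l (some (ev e).thread) r :=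
  Iff.rfl

@[simp] theorem alt_some_cons (l e t : ℕ) (r : Trace) :
    Alt ev l (some t) (e :: r) ↔
      (ev e).op = Op.rel l ∧ (ev e).thread = t ∧ Alt ev l none r :=
  Iff.rfl

theorem touchesB_eq_true {l e : ℕ} :
    touchesB ev l e = true ↔ ((ev e).op = Op.acq l ∨ (ev e).op = Op.rel l) := by
  simp [touchesB]

/-- Characterization of `lockOk` via per-lock alternation. -/
theorem lockOk_iff_alt : ∀ (τ : Trace) (h : ℕ → Option ℕ),
    lockOk ev h τ ↔ ∀ l, Alt ev l (h l) (τ.filter (touchesB ev l))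
  | [], h => by simp [lockOk]
  | e :: rest, h => by
    rcases hop : (ev e).op with x | x | l0 | l0
    · have h1 : lockOk ev h (e :: rest) ↔ lockOk ev h rest := by
        simp only [lockOk, hop]
      have h2 : ∀ l, (e :: rest).filter (touchesB ev l) = rest.filter (touchesB ev l) := by
        intro l; simp [List.filter_cons, touchesB, hop]
      rw [h1, lockOk_iff_alt rest h]
      exact forall_congr' fun l => by rw [h2 l]
    · have h1 : lockOk ev h (e :: rest) ↔ lockOk ev h rest := by
        simp only [lockOk, hop]
      have h2 : ∀ l, (e :: rest).filter (touchesB ev l) = rest.filter (touchesB ev l) := by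
        intro l; simp [List.filter_cons, touchesB, hop]
      rw [h1, lockOk_iff_alt rest h]
      exact forall_congr' fun l => by rw [h2 l]
    · -- acq l0
      have h1 : lockOk ev h (e :: rest) ↔
          (h l0 = none ∧
            lockOk ev (Function.update h l0 (some (ev e).thread)) rest) := by
        simp only [lockOk, hop]
      have hfeq : (e :: rest).filter (touchesB ev l0) =
          e :: rest.filter (touchesB ev l0) := by
        simp [List.filter_cons, touchesB, hop]
      have hfne : ∀ l, l ≠ l0 → (e :: rest).filter (touchesB ev l) =
          rest.filter (touchesB ev l) := by
        intro l hl; simp [List.filter_cons, touchesB, hop, Ne.symm hl]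
      rw [h1, lockOk_iff_alt rest _]
      constructor
      · rintro ⟨hnone, halt⟩ l
        by_cases hl : l = l0
        · subst hl
          rw [hfeq, hnone]
          refine ⟨hop, ?_⟩
          have := halt l
          rwa [Function.update_self] at this
        · rw [hfne l hl]
          have := halt l
          rwa [Function.update_of_ne hl] at this
      · intro halt
        have h0 := halt l0
        rw [hfeq] at h0
        have hnone : h l0 = none := by
          cases hh : h l0 with
          | none => rfl
          | some t =>
            rw [hh] at h0
            rw [alt_some_cons] at h0
            rw [hop] at h0
            exact absurd h0.1 (by simp)
        rw [hnone] at h0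
        refine ⟨hnone, fun l => ?_⟩
        by_cases hl : l = l0
        · subst hl
          rw [Function.update_self]
          exact h0.2
        · rw [Function.update_of_ne hl, ← hfne l hl]
          exact halt l
    · -- rel l0
      have h1 : lockOk ev h (e :: rest) ↔
          (h l0 = some (ev e).thread ∧
            lockOk ev (Function.update h l0 none) rest) := by
        simp only [lockOk, hop]
      have hfeq : (e :: rest).filter (touchesB ev l0) =
          e :: rest.filter (touchesB ev l0) := by
        simp [List.filter_cons, touchesB, hop]
      have hfne : ∀ l, l ≠ l0 → (e :: rest).filter (touchesB ev l) =
          rest.filter (touchesB ev l) := by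
        intro l hl; simp [List.filter_cons, touchesB, hop, Ne.symm hl]
      rw [h1, lockOk_iff_alt rest _]
      constructor
      · rintro ⟨hsome, halt⟩ l
        by_cases hl : l = l0
        · subst hl
          rw [hfeq, hsome]
          refine ⟨hop, rfl, ?_⟩
          have := halt l
          rwa [Function.update_self] at this
        · rw [hfne l hl]
          have := halt l
          rwa [Function.update_of_ne hl] at this
      · intro halt
        have h0 := halt l0
        rw [hfeq] at h0
        have hsome : h l0 = some (ev e).thread := by
          cases hh : h l0 with
          | none =>
            rw [hh] at h0
            rw [alt_none_cons] at h0
            rw [hop] at h0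
            exact absurd h0.1 (by simp)
          | some t =>
            rw [hh] at h0
            rw [alt_some_cons] at h0
            rw [h0.2.1]
        rw [hsome] at h0
        refine ⟨hsome, fun l => ?_⟩
        by_cases hl : l = l0
        · subst hl
          rw [Function.update_self]
          exact h0.2.2
        · rw [Function.update_of_ne hl, ← hfne l hl]
          exact halt l

/-- Every element of an alternation list is an acquire or release of `l`. -/
theorem alt_mem_op (l : ℕ) : ∀ (M : Trace) (s : Option ℕ), Alt ev l s M →
    ∀ q ∈ M, (ev q).op = Op.acq l ∨ (ev q).op = Op.rel l := by
  intro M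
  induction M with
  | nil => intro s _ q hq; simp at hq
  | cons e r ih =>
    intro s hs q hq
    rcases List.mem_cons.mp hq with rfl | hq'
    · cases s with
      | none => exact Or.inl hs.1
      | some t => exact Or.inr hs.1
    · cases s with
      | none => exact ih _ hs.2 q hq'
      | some t => exact ih _ hs.2.2 q hq'

/-- Adjacent pairs in an alternation list starting from an arbitrary state. -/
theorem alt_adj' (l : ℕ) : ∀ (u : Trace) (s : Option ℕ) (x y : ℕ) (v : Trace),
    Alt ev l s (u ++ x :: y :: v) →
    ((ev x).op = Op.acq l ∧ (ev y).op = Op.rel l ∧ (ev y).thread = (ev x).thread) ∨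
    ((ev x).op = Op.rel l ∧ (ev y).op = Op.acq l) := by
  intro u
  induction u with
  | nil =>
    intro s x y v hs
    cases s with
    | none => exact Or.inl ⟨hs.1, hs.2.1, hs.2.2.1⟩
    | some t => exact Or.inr ⟨hs.1, hs.2.2.1⟩
  | cons a u ih =>
    intro s x y v hs
    cases s with
    | none => exact ih _ x y v hs.2
    | some t => exact ih _ x y v hs.2.2

/-- Adjacent pairs in an alternation list from the free state. -/
theorem alt_adj (l : ℕ) {M u v : Trace} {x y : ℕ}
    (hM : Alt ev l none M) (heq : M = u ++ x :: y :: v) :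
    ((ev x).op = Op.acq l ∧ (ev y).op = Op.rel l ∧ (ev y).thread = (ev x).thread) ∨
    ((ev x).op = Op.rel l ∧ (ev y).op = Op.acq l) :=
  alt_adj' ev l u none x y v (heq ▸ hM)

/-- After an acquire in an alternation list comes its release, same thread. -/
theorem alt_adj_acq (l : ℕ) {M u v : Trace} {x y : ℕ}
    (hM : Alt ev l none M) (heq : M = u ++ x :: y :: v)
    (hx : (ev x).op = Op.acq l) :
    (ev y).op = Op.rel l ∧ (ev y).thread = (ev x).thread := by
  rcases alt_adj ev l hM heq with h | h
  · exact ⟨h.2.1, h.2.2⟩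
  · rw [hx] at h; exact absurd h.1 (by simp)

/-- Before a release in an alternation list comes its acquire, same thread. -/
theorem alt_adj_rel (l : ℕ) {M u v : Trace} {x y : ℕ}
    (hM : Alt ev l none M) (heq : M = u ++ x :: y :: v)
    (hy : (ev y).op = Op.rel l) :
    (ev x).op = Op.acq l ∧ (ev y).thread = (ev x).thread := by
  rcases alt_adj ev l hM heq with h | h
  · exact ⟨h.1, h.2.2⟩
  · rw [hy] at h; exact absurd h.2 (by simp)

/-- Every release in an alternation list (from the free state) has an
immediate predecessor. -/
theorem alt_rel_decomp (l : ℕ) : ∀ (M : Trace), Alt ev l none M →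
    ∀ y ∈ M, (ev y).op = Op.rel l → ∃ u x v, M = u ++ x :: y :: v
  | [] => by intro _ y hy; simp at hy
  | [a] => by
    intro h y hy hop
    simp only [List.mem_singleton] at hy
    subst hy
    have := h.1
    rw [hop] at this
    exact absurd this (by simp)
  | a :: r :: M => by
    intro h y hy hop
    rcases List.mem_cons.mp hy with rfl | hy'
    · have := h.1
      rw [hop] at this
      exact absurd this (by simp)
    rcases List.mem_cons.mp hy' with rfl | hy''
    · exact ⟨[], a, M, rfl⟩
    · obtain ⟨u, x, v, huv⟩ :=
        alt_rel_decomp l M h.2.2.2 y hy'' hop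
      exact ⟨a :: r :: u, x, v, by simp [huv]⟩

/-- Filtering an alternation list by a predicate closed under the matching
acquire of each release, and containing the release matching any acquire
that is followed by another acquire in the predicate, preserves alternation. -/
theorem alt_filter (l : ℕ) (P : ℕ → Bool) :
    ∀ (M : Trace), Alt ev l none M →
    (∀ u x y v, M = u ++ x :: y :: v → (ev y).op = Op.rel l →
      P y = true → P x = true) →
    (∀ u x y v z w, M = u ++ x :: y :: (v ++ z :: w) → (ev x).op = Op.acq l →
      (ev z).op = Op.acq l → P x = true → P z = true → P y = true) →
    Alt ev l none (M.filter P)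
  | [] => by intro _ _ _; simp
  | [a] => by
    intro h _ _
    by_cases hPa : P a = true
    · have hfa : List.filter P [a] = [a] := by simp [List.filter_cons, hPa]
      rw [hfa]
      exact ⟨h.1, trivial⟩
    · simp [List.filter_cons, Bool.eq_false_iff.mpr hPa]
  | a :: r :: M => by
    intro h Hrel Hacq
    have ha : (ev a).op = Op.acq l := h.1
    have hr : (ev r).op = Op.rel l := h.2.1
    have hth : (ev r).thread = (ev a).thread := h.2.2.1
    have hM : Alt ev l none M := h.2.2.2
    have Hrel' : ∀ u x y v, M = u ++ x :: y :: v → (ev y).op = Op.rel l →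
        P y = true → P x = true := by
      intro u x y v huv hy hPy
      exact Hrel (a :: r :: u) x y v (by rw [huv]; rfl) hy hPy
    have Hacq' : ∀ u x y v z w, M = u ++ x :: y :: (v ++ z :: w) →
        (ev x).op = Op.acq l → (ev z).op = Op.acq l →
        P x = true → P z = true → P y = true := by
      intro u x y v z w huv hx hz hPx hPz
      exact Hacq (a :: r :: u) x y v z w (by rw [huv]; rfl) hx hz hPx hPz
    have ih := alt_filter l P M hM Hrel' Hacq'
    by_cases hPa : P a = true
    · by_cases hPr : P r = true
      · simp only [List.filter_cons, hPa, hPr, if_true]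
        exact ⟨ha, hr, hth, ih⟩
      · -- P a true, P r false: no element of M satisfies P
        have hnone : ∀ q ∈ M, ¬ P q = true := by
          intro q hq hPq
          have hacq_case : ∀ z ∈ M, (ev z).op = Op.acq l → P z = true → False := by
            intro z hz hzop hPz
            obtain ⟨s, t, hst⟩ := List.append_of_mem hz
            have : P r = true :=
              Hacq [] a r s z t (by rw [hst]; rfl) ha hzop hPa hPz
            exact hPr this
          rcases alt_mem_op ev l M none hM q hq with hq1 | hq2
          · exact hacq_case q hq hq1 hPq
          · obtain ⟨u, x, v, huv⟩ := alt_rel_decomp ev l M hM q hq hq2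
            have hx : (ev x).op = Op.acq l :=
              (alt_adj_rel ev l hM huv hq2).1
            have hPx : P x = true := Hrel' u x q v huv hq2 hPq
            have hxM : x ∈ M := by rw [huv]; simp
            exact hacq_case x hxM hx hPx
        have hMnil : M.filter P = [] := by
          rw [List.filter_eq_nil_iff]
          exact hnone
        simp only [List.filter_cons, hPa, Bool.eq_false_iff.mpr hPr, if_true, if_false]
        rw [hMnil]
        exact ⟨ha, trivial⟩
    · have hPr : ¬ P r = true := by
        intro hPr
        exact hPa (Hrel [] a r M rfl hr hPr)
      simp only [List.filter_cons, Bool.eq_false_iff.mpr hPa, Bool.eq_false_iff.mpr hPr,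
        if_false]
      exact ih

/-- The lock state at the end of an alternation list. -/
def altEnd (l : ℕ) : Option ℕ → Trace → Option ℕ
  | s, [] => s
  | _, e :: r =>
      altEnd l (if (ev e).op = Op.acq l then some (ev e).thread else none) r

/-- Splitting an alternation over an append. -/
theorem alt_append (l : ℕ) : ∀ (A : Trace) (s : Option ℕ) (B : Trace),
    Alt ev l s (A ++ B) ↔ (Alt ev l s A ∧ Alt ev l (altEnd ev l s A) B) := by
  intro A
  induction A with
  | nil => intro s B; simp [altEnd]
  | cons e A ih =>
    intro s B
    cases s with
    | none =>
      simp only [List.cons_append, alt_none_cons, altEnd]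
      constructor
      · rintro ⟨he, hrest⟩
        rw [ih] at hrest
        rw [if_pos he]
        exact ⟨⟨he, hrest.1⟩, hrest.2⟩
      · rintro ⟨⟨he, hA⟩, hB⟩
        rw [if_pos he] at hB
        exact ⟨he, (ih _ _).mpr ⟨hA, hB⟩⟩
    | some t =>
      simp only [List.cons_append, alt_some_cons, altEnd]
      constructor
      · rintro ⟨he, hth, hrest⟩
        rw [ih] at hrest
        rw [if_neg (by rw [he]; simp)]
        exact ⟨⟨he, hth, hrest.1⟩, hrest.2⟩
      · rintro ⟨⟨he, hth, hA⟩, hB⟩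
        rw [if_neg (by rw [he]; simp)] at hB
        exact ⟨he, hth, (ih _ _).mpr ⟨hA, hB⟩⟩

/-! #### Index and order toolkit -/

theorem idx_decomp {K u v : Trace} {x : ℕ} (hnd : K.Nodup) (heq : K = u ++ x :: v) :
    K.idxOf x = u.length := by
  subst heq
  have hxu : x ∉ u := fun hx =>
    (List.nodup_append'.mp hnd).2.2 hx (List.mem_cons_self)
  rw [List.idxOf_append_of_notMem hxu, List.idxOf_cons_self]
  omega

theorem indexOf_lt_of_ne {K : Trace} {a b : ℕ} (ha : a ∈ K) (hb : b ∈ K)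
    (hne : a ≠ b) (hle : K.idxOf a ≤ K.idxOf b) : K.idxOf a < K.idxOf b :=
  lt_of_le_of_ne hle fun h => hne ((List.idxOf_inj ha).mp h)

theorem indexOf_filter_le_iff (P : ℕ → Bool) :
    ∀ (K : Trace), K.Nodup → ∀ {a b : ℕ}, a ∈ K.filter P → b ∈ K.filter P →
      ((K.filter P).idxOf a ≤ (K.filter P).idxOf b ↔
        K.idxOf a ≤ K.idxOf b) := by
  intro K
  induction K with
  | nil => intro _ a b ha; simp at ha
  | cons x K ih =>
    intro hnd a b ha hb
    have hK : K.Nodup := (List.nodup_cons.mp hnd).2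
    have hPa : P a = true := (List.mem_filter.mp ha).2
    have hPb : P b = true := (List.mem_filter.mp hb).2
    by_cases hax : a = x
    · subst hax
      have hfc : (a :: K).filter P = a :: K.filter P := by
        simp [List.filter_cons, hPa]
      rw [hfc, List.idxOf_cons_self]
      simp
    · by_cases hbx : b = x
      · subst hbx
        have hfc : (b :: K).filter P = b :: K.filter P := by
          simp [List.filter_cons, hPb]
        rw [hfc]
        have haK : a ∈ K.filter P := by
          rw [hfc] at ha
          exact (List.mem_cons.mp ha).resolve_left hax
        rw [List.idxOf_cons_self, List.idxOf_cons_ne _ (Ne.symm hax),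
          List.idxOf_cons_ne _ (Ne.symm hax), List.idxOf_cons_self]
        simp
      · cases hPx : P x with
        | false =>
          have hfc : (x :: K).filter P = K.filter P := by
            simp [List.filter_cons, hPx]
          rw [hfc] at ha hb ⊢
          rw [List.idxOf_cons_ne _ (Ne.symm hax), List.idxOf_cons_ne _ (Ne.symm hbx)]
          rw [Nat.succ_le_succ_iff]
          exact ih hK ha hb
        | true =>
          have hfc : (x :: K).filter P = x :: K.filter P := by
            simp [List.filter_cons, hPx]
          rw [hfc] at ha hb ⊢
          have haK : a ∈ K.filter P := (List.mem_cons.mp ha).resolve_left hax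
          have hbK : b ∈ K.filter P := (List.mem_cons.mp hb).resolve_left hbx
          rw [List.idxOf_cons_ne _ (Ne.symm hax), List.idxOf_cons_ne _ (Ne.symm hbx),
            List.idxOf_cons_ne _ (Ne.symm hax), List.idxOf_cons_ne _ (Ne.symm hbx)]
          rw [Nat.succ_le_succ_iff, Nat.succ_le_succ_iff]
          exact ih hK haK hbK

section Mid

variable {pre σ suf : Trace}

theorem not_mem_pre (hnd : (pre ++ σ ++ suf).Nodup) {e : ℕ} (he : e ∈ σ) :
    e ∉ pre := by
  rw [List.append_assoc] at hnd
  intro hp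
  exact (List.nodup_append'.mp hnd).2.2 hp (List.mem_append_left _ he)

theorem not_mem_suf (hnd : (pre ++ σ ++ suf).Nodup) {e : ℕ} (he : e ∈ σ) :
    e ∉ suf := by
  intro hs
  exact (List.nodup_append'.mp hnd).2.2 (List.mem_append_right _ he) hs

theorem mem_mid {e : ℕ} (he : e ∈ σ) : e ∈ pre ++ σ ++ suf := by simp [he]

theorem idx_mid (hnd : (pre ++ σ ++ suf).Nodup) {e : ℕ} (he : e ∈ σ) :
    (pre ++ σ ++ suf).idxOf e = pre.length + σ.idxOf e := by
  rw [List.append_assoc, List.idxOf_append_of_notMem (not_mem_pre hnd he),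
    List.idxOf_append_of_mem he]

theorem idx_pre {e : ℕ} (he : e ∈ pre) :
    (pre ++ σ ++ suf).idxOf e = pre.idxOf e := by
  rw [List.append_assoc, List.idxOf_append_of_mem he]

theorem idx_suf (hnd : (pre ++ σ ++ suf).Nodup) {e : ℕ} (he : e ∈ suf) :
    (pre ++ σ ++ suf).idxOf e = pre.length + σ.length + suf.idxOf e := by
  have h1 : e ∉ pre := by
    rw [List.append_assoc] at hnd
    intro hp
    exact (List.nodup_append'.mp hnd).2.2 hp (List.mem_append_right _ he)
  have h2 : e ∉ σ := fun hσ => not_mem_suf hnd hσ he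
  rw [List.append_assoc, List.idxOf_append_of_notMem h1,
    List.idxOf_append_of_notMem h2, Nat.add_assoc]

theorem trord_mid_iff (hnd : (pre ++ σ ++ suf).Nodup) {e f : ℕ}
    (he : e ∈ σ) (hf : f ∈ σ) :
    trord (pre ++ σ ++ suf) e f ↔ trord σ e f := by
  constructor
  · rintro ⟨_, _, hle⟩
    refine ⟨he, hf, ?_⟩
    rw [idx_mid hnd he, idx_mid hnd hf] at hle
    omega
  · rintro ⟨_, _, hle⟩
    refine ⟨mem_mid he, mem_mid hf, ?_⟩
    rw [idx_mid hnd he, idx_mid hnd hf]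
    omega

theorem threadOrd_mid_iff (hnd : (pre ++ σ ++ suf).Nodup) {e f : ℕ}
    (he : e ∈ σ) (hf : f ∈ σ) :
    threadOrd ev (pre ++ σ ++ suf) e f ↔ threadOrd ev σ e f :=
  and_congr_left' (trord_mid_iff hnd he hf)

theorem not_trord_suf_mid (hnd : (pre ++ σ ++ suf).Nodup) {e f : ℕ}
    (he : e ∈ suf) (hf : f ∈ σ) : ¬ trord (pre ++ σ ++ suf) e f := by
  rintro ⟨_, _, hle⟩
  rw [idx_suf hnd he, idx_mid hnd hf] at hle
  have := List.idxOf_lt_length_iff.mpr hf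
  omega

theorem take_mid (hnd : (pre ++ σ ++ suf).Nodup) {e : ℕ} (he : e ∈ σ) :
    (pre ++ σ ++ suf).take ((pre ++ σ ++ suf).idxOf e) =
      pre ++ σ.take (σ.idxOf e) := by
  rw [idx_mid hnd he, List.append_assoc, List.take_append,
    List.take_of_length_le (by omega), Nat.add_sub_cancel_left,
    List.take_append,
    Nat.sub_eq_zero_of_le (le_of_lt (List.idxOf_lt_length_iff.mpr he)),
    List.take_zero, List.append_nil]

theorem lw_read {K : Trace} {e x : ℕ} (hop : (ev e).op = Op.read x) :
    lw ev K e =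
      ((K.take (K.idxOf e)).filter fun f =>
        decide ((ev f).op = Op.write x)).getLast? := by
  simp only [lw, hop]

theorem lw_mid (hnd : (pre ++ σ ++ suf).Nodup) {e x : ℕ} (he : e ∈ σ)
    (hop : (ev e).op = Op.read x) :
    lw ev (pre ++ σ ++ suf) e =
      (lw ev σ e).or
        ((pre.filter fun f => decide ((ev f).op = Op.write x)).getLast?) := by
  rw [lw_read ev hop, lw_read ev hop, take_mid hnd he, List.filter_append,
    List.getLast?_append]

theorem lw_append_left {pre K : Trace} {e x : ℕ} (he : e ∈ pre)
    (hop : (ev e).op = Op.read x) :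
    lw ev (pre ++ K) e = lw ev pre e := by
  rw [lw_read ev hop, lw_read ev hop, List.idxOf_append_of_mem he,
    List.take_append,
    Nat.sub_eq_zero_of_le (le_of_lt (List.idxOf_lt_length_iff.mpr he)),
    List.take_zero, List.append_nil]

end Mid

theorem filter_take_indexOf {K : Trace} (hnd : K.Nodup) (P : ℕ → Bool) {e : ℕ}
    (he : e ∈ K.filter P) :
    (K.filter P).take ((K.filter P).idxOf e) =
      (K.take (K.idxOf e)).filter P := by
  obtain ⟨u, v, huv⟩ := List.append_of_mem (List.mem_filter.mp he).1
  have hPe : P e = true := (List.mem_filter.mp he).2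
  subst huv
  have hnu : e ∉ u := fun h =>
    (List.nodup_append'.mp hnd).2.2 h (List.mem_cons_self)
  have hfilter : (u ++ e :: v).filter P = u.filter P ++ e :: v.filter P := by
    simp [List.filter_cons, hPe]
  have hnf : e ∉ u.filter P := fun h => hnu (List.mem_filter.mp h).1
  have h1 : (u ++ e :: v).idxOf e = u.length := by
    rw [List.idxOf_append_of_notMem hnu, List.idxOf_cons_self]
    omega
  have h2 : (u.filter P ++ e :: v.filter P).idxOf e = (u.filter P).length := by
    rw [List.idxOf_append_of_notMem hnf, List.idxOf_cons_self]
    omega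
  rw [hfilter, h1, h2, List.take_left, List.take_left]

theorem head?_filter_and {W P : ℕ → Bool} {w : ℕ} :
    ∀ (L : Trace), (L.filter W).head? = some w → P w = true →
      (L.filter fun a => W a && P a).head? = some w := by
  intro L
  induction L with
  | nil => simp
  | cons a L ih =>
    intro h hP
    cases hWa : W a with
    | false =>
      rw [List.filter_cons, hWa] at h
      simp only [if_false, Bool.false_eq_true] at h
      rw [List.filter_cons]
      simp only [hWa, Bool.false_and, if_false, Bool.false_eq_true]
      exact ih h hP
    | true =>
      rw [List.filter_cons, hWa] at h
      simp only [if_true] at h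
      have haw : a = w := by simpa using h
      subst haw
      rw [List.filter_cons]
      simp [hWa, hP]

theorem getLast?_filter_and {W P : ℕ → Bool} {w : ℕ} (L : Trace)
    (h : (L.filter W).getLast? = some w) (hP : P w = true) :
    (L.filter fun a => W a && P a).getLast? = some w := by
  rw [List.getLast?_eq_head?_reverse] at h ⊢
  rw [← List.filter_reverse] at h ⊢
  exact head?_filter_and _ h hP

/-! #### The easy direction: a race in `σ` is a race in `pre ++ σ ++ suf`. -/

theorem syncpres_race_of_sub (σ pre suf : Trace)
    (hwf : WellFormed ev σ) (hwf' : WellFormed ev (pre ++ σ ++ suf))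
    {e1 e2 : ℕ} (h1 : e1 ∈ σ) (h2 : e2 ∈ σ) (hc : Conflicting ev e1 e2)
    (hr : SyncPresRace ev σ e1 e2) : SyncPresRace ev (pre ++ σ ++ suf) e1 e2 := by
  obtain ⟨-, -, -, ρ, hcr, hsp, hen1, hen2⟩ := hr
  obtain ⟨hndσ, hlkσ⟩ := hwf
  obtain ⟨hnd', hlk'⟩ := hwf'
  have hsub : ∀ e ∈ ρ, e ∈ σ := hcr.subset
  obtain ⟨hndρ, hlkρ⟩ := hcr.wf
  have hndpre : pre.Nodup := by
    rw [List.append_assoc, List.nodup_append] at hnd'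
    exact hnd'.1
  have hdisj : ∀ e ∈ ρ, e ∉ pre := fun e he => not_mem_pre hnd' (hsub e he)
  have hndρ2 : (pre ++ ρ).Nodup := by
    rw [List.nodup_append']
    exact ⟨hndpre, hndρ, by intro a ha hb; exact hdisj a hb ha⟩
  have hnil : pre ++ ρ ++ ([] : Trace) = pre ++ ρ := by simp
  have hndρ3 : (pre ++ ρ ++ ([] : Trace)).Nodup := by rw [hnil]; exact hndρ2
  have hidxρ : ∀ e ∈ ρ, (pre ++ ρ).idxOf e = pre.length + ρ.idxOf e := by
    intro e he
    have := idx_mid (σ := ρ) (suf := []) hndρ3 he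
    rwa [hnil] at this
  have hidxpre : ∀ e ∈ pre, (pre ++ ρ).idxOf e = pre.idxOf e := by
    intro e he
    exact List.idxOf_append_of_mem he
  have hmem3 : ∀ e : ℕ, e ∈ pre ++ σ ++ suf → e ∈ pre ∨ e ∈ σ ∨ e ∈ suf := by
    intro e he
    rw [List.append_assoc, List.mem_append, List.mem_append] at he
    tauto
  -- lockOk of pre ++ ρ
  have hlk2 : lockOk ev (fun _ => none) (pre ++ ρ) := by
    rw [lockOk_iff_alt]
    intro l
    rw [List.filter_append]
    have haσ' := (lockOk_iff_alt ev _ _).mp hlk' l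
    rw [List.append_assoc, List.filter_append, List.filter_append] at haσ'
    rw [alt_append] at haσ'
    obtain ⟨hapre, harest⟩ := haσ'
    rw [alt_append] at harest
    obtain ⟨haσmid, -⟩ := harest
    have haσ := (lockOk_iff_alt ev _ _).mp hlkσ l
    have haρ := (lockOk_iff_alt ev _ _).mp hlkρ l
    rw [alt_append]
    refine ⟨hapre, ?_⟩
    cases hc1 : ρ.filter (touchesB ev l) with
    | nil => exact alt_nil ev l _
    | cons c C =>
      have hcρ : c ∈ ρ.filter (touchesB ev l) := by rw [hc1]; simp
      have hcσ : c ∈ σ.filter (touchesB ev l) := by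
        rw [List.mem_filter] at hcρ ⊢
        exact ⟨hsub c hcρ.1, hcρ.2⟩
      have hs0 : altEnd ev l none (pre.filter (touchesB ev l)) = none := by
        cases hs : altEnd ev l none (pre.filter (touchesB ev l)) with
        | none => rfl
        | some t =>
          rw [hs] at haσmid
          cases hc2 : σ.filter (touchesB ev l) with
          | nil => rw [hc2] at hcσ; simp at hcσ
          | cons d D =>
            rw [hc2] at haσmid haσ
            have hd1 := haσmid.1
            have hd2 := haσ.1
            rw [hd2] at hd1
            exact absurd hd1 (by simp)
      rw [hs0, ← hc1]
      exact haρ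
  -- the correct reordering
  refine ⟨mem_mid h1, mem_mid h2, hc, pre ++ ρ, ?_, ?_, ?_, ?_⟩
  · refine ⟨⟨hndρ2, hlk2⟩, ?_, ?_, ?_⟩
    · -- subset
      intro e he
      rcases List.mem_append.mp he with hp | hρ
      · simp [hp]
      · exact mem_mid (hsub e hρ)
    · -- to_closed
      intro f e hto heρ2
      obtain ⟨⟨hfmem, hemem, hle⟩, hth⟩ := hto
      rcases List.mem_append.mp heρ2 with hep | heρ
      · -- e ∈ pre
        have hidxe : (pre ++ σ ++ suf).idxOf e = pre.idxOf e := idx_pre hep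
        have hf : f ∈ pre := by
          rcases hmem3 f hfmem with h | h | h
          · exact h
          · exfalso
            rw [idx_mid hnd' h, hidxe] at hle
            have := List.idxOf_lt_length_iff.mpr hep
            omega
          · exfalso
            rw [idx_suf hnd' h, hidxe] at hle
            have := List.idxOf_lt_length_iff.mpr hep
            omega
        refine ⟨List.mem_append_left _ hf, ⟨⟨List.mem_append_left _ hf,
          List.mem_append_left _ hep, ?_⟩, hth⟩⟩
        rw [hidxpre f hf, hidxpre e hep]
        rw [idx_pre hf, hidxe] at hle
        exact hle
      · -- e ∈ ρ
        have heσ : e ∈ σ := hsub e heρ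
        rcases hmem3 f hfmem with h | h | h
        · -- f ∈ pre
          refine ⟨List.mem_append_left _ h, ⟨⟨List.mem_append_left _ h,
            List.mem_append_right _ heρ, ?_⟩, hth⟩⟩
          rw [hidxpre f h, hidxρ e heρ]
          have := List.idxOf_lt_length_iff.mpr h
          omega
        · -- f ∈ σ
          have hto' : threadOrd ev σ f e := by
            refine ⟨⟨h, heσ, ?_⟩, hth⟩
            rw [idx_mid hnd' h, idx_mid hnd' heσ] at hle
            omega
          obtain ⟨hfρ, ⟨⟨-, -, hle'⟩, -⟩⟩ := hcr.to_closed f e hto' heρ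
          refine ⟨List.mem_append_right _ hfρ, ⟨⟨List.mem_append_right _ hfρ,
            List.mem_append_right _ heρ, ?_⟩, hth⟩⟩
          rw [hidxρ f hfρ, hidxρ e heρ]
          omega
        · -- f ∈ suf : impossible
          exact absurd ⟨hfmem, hemem, hle⟩ (not_trord_suf_mid hnd' h heσ)
    · -- lw_eq
      rintro e he ⟨x, hop⟩
      rcases List.mem_append.mp he with hep | heρ
      · rw [lw_append_left ev hep hop, List.append_assoc,
          lw_append_left ev hep hop]
      · have hmid := lw_mid ev (σ := ρ) (suf := []) hndρ3 heρ hop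
        rw [hnil] at hmid
        rw [hmid, lw_mid ev hnd' (hsub e heρ) hop,
          hcr.lw_eq e heρ ⟨x, hop⟩]
  · -- SyncPres
    intro a1 a2 l ha1 ha2 hop1 hop2
    rcases List.mem_append.mp ha1 with h1p | h1ρ
    · rcases List.mem_append.mp ha2 with h2p | h2ρ
      · -- both in pre
        have hiff1 : trord (pre ++ ρ) a1 a2 ↔ pre.idxOf a1 ≤ pre.idxOf a2 := by
          constructor
          · rintro ⟨-, -, hle⟩
            rwa [hidxpre a1 h1p, hidxpre a2 h2p] at hle
          · intro hle
            exact ⟨List.mem_append_left _ h1p, List.mem_append_left _ h2p,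
              by rwa [hidxpre a1 h1p, hidxpre a2 h2p]⟩
        have hiff2 : trord (pre ++ σ ++ suf) a1 a2 ↔
            pre.idxOf a1 ≤ pre.idxOf a2 := by
          constructor
          · rintro ⟨-, -, hle⟩
            rwa [idx_pre h1p, idx_pre h2p] at hle
          · intro hle
            exact ⟨by simp [h1p], by simp [h2p],
              by rwa [idx_pre h1p, idx_pre h2p]⟩
        rw [hiff1, hiff2]
      · -- a1 ∈ pre, a2 ∈ ρ : both true
        have t1 : trord (pre ++ ρ) a1 a2 := by
          refine ⟨List.mem_append_left _ h1p, List.mem_append_right _ h2ρ, ?_⟩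
          rw [hidxpre a1 h1p, hidxρ a2 h2ρ]
          have := List.idxOf_lt_length_iff.mpr h1p
          omega
        have t2 : trord (pre ++ σ ++ suf) a1 a2 := by
          refine ⟨by simp [h1p], mem_mid (hsub a2 h2ρ), ?_⟩
          rw [idx_pre h1p, idx_mid hnd' (hsub a2 h2ρ)]
          have := List.idxOf_lt_length_iff.mpr h1p
          omega
        exact iff_of_true t1 t2
    · rcases List.mem_append.mp ha2 with h2p | h2ρ
      · -- a1 ∈ ρ, a2 ∈ pre : both false
        have ha1σ := hsub a1 h1ρ
        have hne : a1 ≠ a2 := fun h => hdisj a1 h1ρ (h ▸ h2p)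
        have t1 : ¬ trord (pre ++ ρ) a1 a2 := by
          rintro ⟨-, -, hle⟩
          rw [hidxpre a2 h2p, hidxρ a1 h1ρ] at hle
          have := List.idxOf_lt_length_iff.mpr h2p
          omega
        have t2 : ¬ trord (pre ++ σ ++ suf) a1 a2 := by
          rintro ⟨-, -, hle⟩
          rw [idx_pre h2p, idx_mid hnd' ha1σ] at hle
          have := List.idxOf_lt_length_iff.mpr h2p
          omega
        exact iff_of_false t1 t2
      · -- both in ρ
        have ha1σ := hsub a1 h1ρ
        have ha2σ := hsub a2 h2ρ
        have hiff1 : trord (pre ++ ρ) a1 a2 ↔ trord ρ a1 a2 := by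
          constructor
          · rintro ⟨-, -, hle⟩
            refine ⟨h1ρ, h2ρ, ?_⟩
            rw [hidxρ a1 h1ρ, hidxρ a2 h2ρ] at hle
            omega
          · rintro ⟨-, -, hle⟩
            refine ⟨List.mem_append_right _ h1ρ, List.mem_append_right _ h2ρ, ?_⟩
            rw [hidxρ a1 h1ρ, hidxρ a2 h2ρ]
            omega
        rw [hiff1, hsp a1 a2 l h1ρ h2ρ hop1 hop2,
          ← trord_mid_iff hnd' ha1σ ha2σ]
  · -- Enabled e1
    obtain ⟨-, hne1, hpred1⟩ := hen1
    refine ⟨mem_mid h1, ?_, ?_⟩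
    · intro hmem
      rcases List.mem_append.mp hmem with h | h
      · exact not_mem_pre hnd' h1 h
      · exact hne1 h
    · intro f hto hfne
      have hfmem := hto.1.1
      have hth := hto.2
      rcases hmem3 f hfmem with h | h | h
      · exact List.mem_append_left _ h
      · refine List.mem_append_right _ (hpred1 f ?_ hfne)
        exact ⟨(trord_mid_iff hnd' h h1).mp hto.1, hth⟩
      · exact absurd hto.1 (not_trord_suf_mid hnd' h h1)
  · -- Enabled e2
    obtain ⟨-, hne2, hpred2⟩ := hen2
    refine ⟨mem_mid h2, ?_, ?_⟩
    · intro hmem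
      rcases List.mem_append.mp hmem with h | h
      · exact not_mem_pre hnd' h2 h
      · exact hne2 h
    · intro f hto hfne
      have hfmem := hto.1.1
      have hth := hto.2
      rcases hmem3 f hfmem with h | h | h
      · exact List.mem_append_left _ h
      · refine List.mem_append_right _ (hpred2 f ?_ hfne)
        exact ⟨(trord_mid_iff hnd' h h2).mp hto.1, hth⟩
      · exact absurd hto.1 (not_trord_suf_mid hnd' h h2)

theorem idx_decomp2 {K u v : Trace} {x y : ℕ} (hnd : K.Nodup)
    (heq : K = u ++ x :: y :: v) :
    K.idxOf x = u.length ∧ K.idxOf y = u.length + 1 := by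
  refine ⟨idx_decomp hnd heq, ?_⟩
  have h2 : K = (u ++ [x]) ++ y :: v := by rw [heq]; simp
  rw [idx_decomp hnd h2, List.length_append, List.length_singleton]

/-! #### The hard direction: a race in `pre ++ σ ++ suf` is a race in `σ`. -/

theorem syncpres_race_to_sub (σ pre suf : Trace)
    (hwf : WellFormed ev σ) (hwf' : WellFormed ev (pre ++ σ ++ suf))
    {e1 e2 : ℕ} (h1 : e1 ∈ σ) (h2 : e2 ∈ σ) (hc : Conflicting ev e1 e2)
    (hr : SyncPresRace ev (pre ++ σ ++ suf) e1 e2) : SyncPresRace ev σ e1 e2 := by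
  obtain ⟨-, -, -, ρ', hcr, hsp, hen1, hen2⟩ := hr
  obtain ⟨hndσ, hlkσ⟩ := hwf
  obtain ⟨hnd', hlk'⟩ := hwf'
  obtain ⟨hndρ', hlkρ'⟩ := hcr.wf
  set P : ℕ → Bool := fun e => decide (e ∈ ρ') with hP
  have hmemρ : ∀ e : ℕ, e ∈ σ.filter P ↔ (e ∈ σ ∧ e ∈ ρ') := by
    intro e; rw [List.mem_filter, hP]; simp
  have hndρ : (σ.filter P).Nodup := hndσ.filter P
  -- lockOk for the filtered trace
  have hlkρ : lockOk ev (fun _ => none) (σ.filter P) := by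
    rw [lockOk_iff_alt]
    intro l
    have hcomm : (σ.filter P).filter (touchesB ev l) =
        (σ.filter (touchesB ev l)).filter P := by
      rw [List.filter_filter, List.filter_filter]
      congr 1
      funext a
      exact Bool.and_comm _ _
    rw [hcomm]
    have hAltL : Alt ev l none (σ.filter (touchesB ev l)) :=
      (lockOk_iff_alt ev _ _).mp hlkσ l
    have hAltN : Alt ev l none ((pre ++ σ ++ suf).filter (touchesB ev l)) :=
      (lockOk_iff_alt ev _ _).mp hlk' l
    have hAltM : Alt ev l none (ρ'.filter (touchesB ev l)) :=
      (lockOk_iff_alt ev _ _).mp hlkρ' l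
    have hndL : (σ.filter (touchesB ev l)).Nodup := hndσ.filter _
    have hndM : (ρ'.filter (touchesB ev l)).Nodup := hndρ'.filter _
    have hndN : ((pre ++ σ ++ suf).filter (touchesB ev l)).Nodup := hnd'.filter _
    apply alt_filter ev l P _ hAltL
    · -- Hrel: the matching acquire of a present release is present
      intro u x y v hL hyrel hPy
      have hyρ' : y ∈ ρ' := by simpa [hP] using hPy
      obtain ⟨hxacq, hxyth⟩ := alt_adj_rel ev l hAltL hL hyrel
      have hxL : x ∈ σ.filter (touchesB ev l) := by rw [hL]; simp
      have hyL : y ∈ σ.filter (touchesB ev l) := by rw [hL]; simp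
      have hxσ : x ∈ σ := (List.mem_filter.mp hxL).1
      have hyσ : y ∈ σ := (List.mem_filter.mp hyL).1
      obtain ⟨hix, hiy⟩ := idx_decomp2 hndL hL
      have hle : σ.idxOf x ≤ σ.idxOf y := by
        rw [← indexOf_filter_le_iff (touchesB ev l) σ hndσ hxL hyL, hix, hiy]
        omega
      have hto : threadOrd ev (pre ++ σ ++ suf) x y :=
        ⟨(trord_mid_iff hnd' hxσ hyσ).mpr ⟨hxσ, hyσ, hle⟩, hxyth.symm⟩
      have := (hcr.to_closed x y hto hyρ').1
      simpa [hP]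
    · -- Hacq: between two present acquires the first release is present
      intro u x y v z w hL hxacq hzacq hPx hPz
      have hxρ' : x ∈ ρ' := by simpa [hP] using hPx
      have hzρ' : z ∈ ρ' := by simpa [hP] using hPz
      have hxL : x ∈ σ.filter (touchesB ev l) := by rw [hL]; simp
      have hyL : y ∈ σ.filter (touchesB ev l) := by rw [hL]; simp
      have hzL : z ∈ σ.filter (touchesB ev l) := by rw [hL]; simp
      have hxσ : x ∈ σ := (List.mem_filter.mp hxL).1
      have hyσ : y ∈ σ := (List.mem_filter.mp hyL).1
      have hzσ : z ∈ σ := (List.mem_filter.mp hzL).1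
      obtain ⟨hixL, hiyL⟩ := idx_decomp2 hndL hL
      have hizL : (σ.filter (touchesB ev l)).idxOf z =
          u.length + v.length + 2 := by
        have h' : σ.filter (touchesB ev l) = (u ++ x :: y :: v) ++ z :: w := by
          rw [hL]; simp
        rw [idx_decomp hndL h']
        simp only [List.length_append, List.length_cons]
        omega
      have hxz : x ≠ z := by
        intro h
        rw [h] at hixL
        omega
      have hxM : x ∈ ρ'.filter (touchesB ev l) :=
        List.mem_filter.mpr ⟨hxρ', by simp [touchesB, hxacq]⟩
      have hzM : z ∈ ρ'.filter (touchesB ev l) :=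
        List.mem_filter.mpr ⟨hzρ', by simp [touchesB, hzacq]⟩
      -- x before z in σ', hence in ρ' (sync-preservation), hence in M
      have hleσ : σ.idxOf x ≤ σ.idxOf z := by
        rw [← indexOf_filter_le_iff (touchesB ev l) σ hndσ hxL hzL, hixL, hizL]
        omega
      have htr1 : trord (pre ++ σ ++ suf) x z :=
        (trord_mid_iff hnd' hxσ hzσ).mpr ⟨hxσ, hzσ, hleσ⟩
      have htr2 : trord ρ' x z := (hsp x z l hxρ' hzρ' hxacq hzacq).mpr htr1
      have h4 : (ρ'.filter (touchesB ev l)).idxOf x <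
          (ρ'.filter (touchesB ev l)).idxOf z :=
        indexOf_lt_of_ne hxM hzM hxz
          ((indexOf_filter_le_iff (touchesB ev l) ρ' hndρ' hxM hzM).mpr htr2.2.2)
      -- the event following x in M
      obtain ⟨u1, v1, hM1⟩ := List.append_of_mem hxM
      have hixM : (ρ'.filter (touchesB ev l)).idxOf x = u1.length :=
        idx_decomp hndM hM1
      have hzv1 : z ∈ v1 := by
        have hzM' := hzM
        rw [hM1] at hzM'
        rcases List.mem_append.mp hzM' with h | h
        · exfalso
          have hzi : (ρ'.filter (touchesB ev l)).idxOf z = u1.idxOf z := by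
            rw [hM1]; exact List.idxOf_append_of_mem h
          have := List.idxOf_lt_length_iff.mpr h
          omega
        · rcases List.mem_cons.mp h with h' | h'
          · exact absurd h' (Ne.symm hxz)
          · exact h'
      cases v1 with
      | nil => simp at hzv1
      | cons y' v1' =>
        have hM1' : ρ'.filter (touchesB ev l) = u1 ++ x :: y' :: v1' := hM1
        obtain ⟨hy'rel, hy'th⟩ := alt_adj_acq ev l hAltM hM1' hxacq
        have hy'M : y' ∈ ρ'.filter (touchesB ev l) := by rw [hM1']; simp
        have hiy'M : (ρ'.filter (touchesB ev l)).idxOf y' = u1.length + 1 :=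
          (idx_decomp2 hndM hM1').2
        have hy'ρ' : y' ∈ ρ' := (List.mem_filter.mp hy'M).1
        have hy'σ' : y' ∈ pre ++ σ ++ suf := hcr.subset y' hy'ρ'
        have hy'N : y' ∈ (pre ++ σ ++ suf).filter (touchesB ev l) :=
          List.mem_filter.mpr ⟨hy'σ', by simp [touchesB, hy'rel]⟩
        obtain ⟨u2, x2, v2, hN2⟩ :=
          alt_rel_decomp ev l _ hAltN y' hy'N hy'rel
        obtain ⟨hx2acq, hx2th⟩ := alt_adj_rel ev l hAltN hN2 hy'rel
        obtain ⟨hix2N, hiy'N⟩ := idx_decomp2 hndN hN2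
        have hx2N : x2 ∈ (pre ++ σ ++ suf).filter (touchesB ev l) := by
          rw [hN2]; simp
        have hx2σ' : x2 ∈ pre ++ σ ++ suf := (List.mem_filter.mp hx2N).1
        -- position of x and y in N
        have hNx : (pre ++ σ ++ suf).filter (touchesB ev l) =
            (pre.filter (touchesB ev l) ++ u) ++ x :: y ::
              ((v ++ z :: w) ++ suf.filter (touchesB ev l)) := by
          rw [List.filter_append, List.filter_append, hL]
          simp [List.append_assoc]
        obtain ⟨hixN, hiyN⟩ := idx_decomp2 hndN hNx
        have hxN : x ∈ (pre ++ σ ++ suf).filter (touchesB ev l) := by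
          rw [hNx]; simp
        have hyN : y ∈ (pre ++ σ ++ suf).filter (touchesB ev l) := by
          rw [hNx]; simp
        rcases Nat.lt_trichotomy
            (((pre ++ σ ++ suf).filter (touchesB ev l)).idxOf x2)
            (((pre ++ σ ++ suf).filter (touchesB ev l)).idxOf x) with
          hlt | heq | hgt
        · -- x2 strictly before x in σ' : contradiction with thread order
          exfalso
          have h5 : ((pre ++ σ ++ suf).filter (touchesB ev l)).idxOf y' ≤
              ((pre ++ σ ++ suf).filter (touchesB ev l)).idxOf x := by omega
          have hleσ' : (pre ++ σ ++ suf).idxOf y' ≤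
              (pre ++ σ ++ suf).idxOf x :=
            (indexOf_filter_le_iff (touchesB ev l) _ hnd' hy'N hxN).mp h5
          have hto' : threadOrd ev (pre ++ σ ++ suf) y' x :=
            ⟨⟨hy'σ', mem_mid hxσ, hleσ'⟩, hy'th⟩
          obtain ⟨-, hto2⟩ := hcr.to_closed y' x hto' hxρ'
          have h7 : (ρ'.filter (touchesB ev l)).idxOf y' ≤
              (ρ'.filter (touchesB ev l)).idxOf x :=
            (indexOf_filter_le_iff (touchesB ev l) ρ' hndρ' hy'M hxM).mpr
              hto2.1.2.2
          omega
        · -- x2 = x : then y' = y is present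
          have hx2x : x2 = x := (List.idxOf_inj hx2N).mp heq
          have hy'y : y' = y := by
            refine (List.idxOf_inj hy'N).mp ?_
            omega
          have : y ∈ ρ' := hy'y ▸ hy'ρ'
          simpa [hP]
        · -- x2 strictly after x in σ' : contradiction via sync-preservation
          exfalso
          have hxx2 : x ≠ x2 := by
            intro h
            rw [h] at hgt
            exact lt_irrefl _ hgt
          have htrxx2 : trord (pre ++ σ ++ suf) x x2 :=
            ⟨mem_mid hxσ, hx2σ',
              (indexOf_filter_le_iff (touchesB ev l) _ hnd' hxN hx2N).mp
                (le_of_lt hgt)⟩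
          have htox2y' : threadOrd ev (pre ++ σ ++ suf) x2 y' := by
            refine ⟨⟨hx2σ', hy'σ', ?_⟩, hx2th.symm⟩
            refine (indexOf_filter_le_iff (touchesB ev l) _ hnd' hx2N hy'N).mp ?_
            omega
          obtain ⟨hx2ρ', hto2⟩ := hcr.to_closed x2 y' htox2y' hy'ρ'
          have hx2M : x2 ∈ ρ'.filter (touchesB ev l) :=
            List.mem_filter.mpr ⟨hx2ρ', by simp [touchesB, hx2acq]⟩
          have htr3 : trord ρ' x x2 :=
            (hsp x x2 l hxρ' hx2ρ' hxacq hx2acq).mpr htrxx2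
          have h8 : (ρ'.filter (touchesB ev l)).idxOf x <
              (ρ'.filter (touchesB ev l)).idxOf x2 :=
            indexOf_lt_of_ne hxM hx2M hxx2
              ((indexOf_filter_le_iff (touchesB ev l) ρ' hndρ' hxM hx2M).mpr
                htr3.2.2)
          have h9 : (ρ'.filter (touchesB ev l)).idxOf x2 ≤
              (ρ'.filter (touchesB ev l)).idxOf y' :=
            (indexOf_filter_le_iff (touchesB ev l) ρ' hndρ' hx2M hy'M).mpr
              hto2.1.2.2
          have hx2y' : x2 = y' :=
            (List.idxOf_inj hx2M).mp (by omega)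
          rw [hx2y', hy'rel] at hx2acq
          exact absurd hx2acq (by simp)
  -- assemble the race
  refine ⟨h1, h2, hc, σ.filter P, ⟨⟨hndρ, hlkρ⟩, ?_, ?_, ?_⟩, ?_, ?_, ?_⟩
  · -- subset
    exact fun e he => (List.mem_filter.mp he).1
  · -- to_closed
    intro f e hto heρ
    have heσ : e ∈ σ := ((hmemρ e).mp heρ).1
    have heρ' : e ∈ ρ' := ((hmemρ e).mp heρ).2
    have hfσ : f ∈ σ := hto.1.1
    have hto' : threadOrd ev (pre ++ σ ++ suf) f e :=
      ⟨(trord_mid_iff hnd' hfσ heσ).mpr hto.1, hto.2⟩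
    obtain ⟨hfρ', -⟩ := hcr.to_closed f e hto' heρ'
    have hfρ : f ∈ σ.filter P := (hmemρ f).mpr ⟨hfσ, hfρ'⟩
    exact ⟨hfρ, ⟨⟨hfρ, heρ,
      (indexOf_filter_le_iff P σ hndσ hfρ heρ).mpr hto.1.2.2⟩, hto.2⟩⟩
  · -- lw_eq
    rintro e heρ ⟨x, hop⟩
    have heσ : e ∈ σ := ((hmemρ e).mp heρ).1
    have heρ' : e ∈ ρ' := ((hmemρ e).mp heρ).2
    have hk := filter_take_indexOf hndσ P heρ
    rw [lw_read ev hop, lw_read ev hop, hk, List.filter_filter]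
    cases hcase : ((σ.take (σ.idxOf e)).filter fun f =>
        decide ((ev f).op = Op.write x)).getLast? with
    | some w =>
      have hlwσ : lw ev σ e = some w := by rw [lw_read ev hop, hcase]
      have hlwσ' : lw ev (pre ++ σ ++ suf) e = some w := by
        rw [lw_mid ev hnd' heσ hop, hlwσ]
        rfl
      have hlwρ' : lw ev ρ' e = some w := by
        rw [hcr.lw_eq e heρ' ⟨x, hop⟩, hlwσ']
      have hwρ' : w ∈ ρ' := by
        rw [lw_read ev hop] at hlwρ'
        have hmem := List.mem_of_getLast? hlwρ'
        exact List.mem_of_mem_take (List.mem_filter.mp hmem).1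
      exact getLast?_filter_and _ hcase (by simp [hP, hwρ'])
    | none =>
      rw [List.getLast?_eq_none_iff] at hcase ⊢
      rw [List.filter_eq_nil_iff] at hcase ⊢
      intro a ha hWP
      rw [Bool.and_eq_true] at hWP
      exact hcase a ha hWP.1
  · -- SyncPres
    intro a1 a2 l ha1 ha2 hop1 hop2
    have h1σ : a1 ∈ σ := ((hmemρ a1).mp ha1).1
    have h2σ : a2 ∈ σ := ((hmemρ a2).mp ha2).1
    constructor
    · rintro ⟨-, -, hle⟩
      exact ⟨h1σ, h2σ, (indexOf_filter_le_iff P σ hndσ ha1 ha2).mp hle⟩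
    · rintro ⟨-, -, hle⟩
      exact ⟨ha1, ha2, (indexOf_filter_le_iff P σ hndσ ha1 ha2).mpr hle⟩
  · -- Enabled e1
    obtain ⟨-, hne1, hpred1⟩ := hen1
    refine ⟨h1, ?_, ?_⟩
    · intro hmem
      exact hne1 ((hmemρ e1).mp hmem).2
    · intro f hto hfne
      have hfσ : f ∈ σ := hto.1.1
      have hto' : threadOrd ev (pre ++ σ ++ suf) f e1 :=
        ⟨(trord_mid_iff hnd' hfσ h1).mpr hto.1, hto.2⟩
      exact (hmemρ f).mpr ⟨hfσ, hpred1 f hto' hfne⟩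
  · -- Enabled e2
    obtain ⟨-, hne2, hpred2⟩ := hen2
    refine ⟨h2, ?_, ?_⟩
    · intro hmem
      exact hne2 ((hmemρ e2).mp hmem).2
    · intro f hto hfne
      have hfσ : f ∈ σ := hto.1.1
      have hto' : threadOrd ev (pre ++ σ ++ suf) f e2 :=
        ⟨(trord_mid_iff hnd' hfσ h2).mpr hto.1, hto.2⟩
      exact (hmemρ f).mpr ⟨hfσ, hpred2 f hto' hfne⟩

end Race

open Race in
/-- if the well-formed trace `σ` occurs as a contiguous
subtrace of a well-formed trace `σ'`, then a conflicting pair of `σ` is a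
sync-preserving race in `σ'` iff it is a sync-preserving race in `σ`. -/
theorem syncpres_race_subtrace_iff (ev : ℕ → EventData) (σ pre suf : Trace)
    (hwf : WellFormed ev σ) (hwf' : WellFormed ev (pre ++ σ ++ suf))
    (e1 e2 : ℕ) (h1 : e1 ∈ σ) (h2 : e2 ∈ σ) (hc : Conflicting ev e1 e2) :
    SyncPresRace ev (pre ++ σ ++ suf) e1 e2 ↔ SyncPresRace ev σ e1 e2 :=
  ⟨Race.syncpres_race_to_sub ev σ pre suf hwf hwf' h1 h2 hc,
   Race.syncpres_race_of_sub ev σ pre suf hwf hwf' h1 h2 hc⟩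
end
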